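/- arXiv:cs/0209018 — 11 statements merged into one kernel-verified Lean document; each statement's English description precedes it below -/
import Mathlib

section
/- If a language L ⊆ Σ* is recognized by a PRA-C with interval (p₁,p₂), then there exists a PRA-C which recognizes L with probability p, where p = p₂/(p₁+p₂) if p₁+p₂ ≥ 1, and p = (1−p₁)/(2−p₁−p₂) if p₁+p₂ < 1. -/
/-- A real square matrix is doubly stochastic if all entries are nonnegative and
every row and every column sums to 1. -/
def DoublyStochastic {n : ℕ} (A : Matrix (Fin n) (Fin n) ℝ) : Prop :=
  (∀ i j, 0 ≤ A i j) ∧ (∀ i, ∑ j, A i j = 1) ∧ (∀ j, ∑ i, A i j = 1)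

/-- A 1-way probabilistic reversible C-automaton (PRA-C) over input alphabet `α`:
a finite state set `Fin n`, an initial state, a set of accepting states, and
a doubly stochastic matrix for each symbol of the working alphabet
(the letters of `α` together with the end-markers `#` and `$`). -/
structure PRAC (α : Type) where
  n : ℕ
  q0 : Fin n
  F : Finset (Fin n)
  V : α → Matrix (Fin n) (Fin n) ℝ
  Vhash : Matrix (Fin n) (Fin n) ℝ
  Vdollar : Matrix (Fin n) (Fin n) ℝ
  ds : ∀ a, DoublyStochastic (V a)
  ds_hash : DoublyStochastic Vhash
  ds_dollar : DoublyStochastic Vdollar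

namespace PRAC

variable {α : Type}

/-- Acceptance probability of a word `w = σ₁…σ_k`: the total mass on accepting states of
`V_$ ⬝ V_{σ_k} ⬝ ⋯ ⬝ V_{σ₁} ⬝ V_# ⬝ e_{q₀}`. -/
def accProb (A : PRAC α) (w : List α) : ℝ :=
  ∑ q ∈ A.F,
    (A.Vdollar.mulVec
      (w.foldl (fun v a => (A.V a).mulVec v) (A.Vhash.mulVec (Pi.single A.q0 1)))) q

/-- Recognition of a language with interval `(p₁, p₂)`. -/
def Recognizes (A : PRAC α) (L : Set (List α)) (p1 p2 : ℝ) : Prop :=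
  0 ≤ p1 ∧ p1 < p2 ∧ p2 ≤ 1 ∧
  (∀ w ∈ L, p2 ≤ A.accProb w) ∧ (∀ w ∉ L, A.accProb w ≤ p1)

/-- Recognition with probability `p`, i.e. with interval `(1 - p, p)`. -/
def RecognizesWithProb (A : PRAC α) (L : Set (List α)) (p : ℝ) : Prop :=
  A.Recognizes L (1 - p) p

end PRAC


open Matrix


def DS' {m : Type} [Fintype m] (M : Matrix m m ℝ) : Prop :=
  (∀ i j, 0 ≤ M i j) ∧ (∀ i, ∑ j, M i j = 1) ∧ (∀ j, ∑ i, M i j = 1)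

lemma ds'_fromBlocks {m : Type} [Fintype m] {M N : Matrix m m ℝ}
    (hM : DS' M) (hN : DS' N) : DS' (fromBlocks M 0 0 N) := by
  refine ⟨?_, ?_, ?_⟩
  · rintro (i|i) (j|j) <;> simp [fromBlocks, hM.1 i j, hN.1 i j]
  · rintro (i|i) <;> simp [Fintype.sum_sum_type, fromBlocks, hM.2.1 i, hN.2.1 i]
  · rintro (j|j) <;> simp [Fintype.sum_sum_type, fromBlocks, hM.2.2 j, hN.2.2 j]

lemma ds'_swap {m : Type} [Fintype m] [DecidableEq m] :
    DS' (fromBlocks (0 : Matrix m m ℝ) (1 : Matrix m m ℝ) (1 : Matrix m m ℝ) (0 : Matrix m m ℝ)) := by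
  refine ⟨?_, ?_, ?_⟩
  · rintro (i|i) (j|j) <;> simp [fromBlocks, Matrix.one_apply] <;> positivity
  · rintro (i|i) <;> simp [Fintype.sum_sum_type, fromBlocks, Matrix.one_apply]
  · rintro (j|j) <;> simp [Fintype.sum_sum_type, fromBlocks, Matrix.one_apply]

lemma ds'_convex {m : Type} [Fintype m] {M N : Matrix m m ℝ} {t : ℝ}
    (ht0 : 0 ≤ t) (ht1 : t ≤ 1) (hM : DS' M) (hN : DS' N) :
    DS' (t • M + (1 - t) • N) := by
  refine ⟨?_, ?_, ?_⟩
  · intro i j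
    have := hM.1 i j; have := hN.1 i j
    simp only [Matrix.add_apply, Matrix.smul_apply, smul_eq_mul]
    nlinarith
  · intro i
    simp [Finset.sum_add_distrib, ← Finset.mul_sum, hM.2.1 i, hN.2.1 i]
  · intro j
    simp [Finset.sum_add_distrib, ← Finset.mul_sum, hM.2.2 j, hN.2.2 j]

lemma ds'_submatrix {m l : Type} [Fintype m] [Fintype l] (e : l ≃ m) {M : Matrix m m ℝ}
    (hM : DS' M) : DS' (M.submatrix e e) := by
  refine ⟨fun i j => hM.1 _ _, fun i => ?_, fun j => ?_⟩
  · rw [show (∑ j, M.submatrix e e i j) = ∑ j, M (e i) (e j) from rfl,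
      Equiv.sum_comp e (fun j => M (e i) j)]
    exact hM.2.1 _
  · rw [show (∑ i, M.submatrix e e i j) = ∑ i, M (e i) (e j) from rfl,
      Equiv.sum_comp e (fun i => M i (e j))]
    exact hM.2.2 _

lemma ds'_to_ds {n : ℕ} {M : Matrix (Fin n) (Fin n) ℝ} (h : DS' M) : DoublyStochastic M := h

lemma blockdiag_mulVec {n : ℕ} (M : Matrix (Fin n) (Fin n) ℝ) (v : Fin n → ℝ) :
    (fromBlocks M 0 0 M) *ᵥ (Sum.elim v 0) = Sum.elim (M *ᵥ v) 0 := by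
  rw [fromBlocks_mulVec]
  funext i; rcases i with j | j <;> simp

lemma single_comp {m l : Type} [Fintype m] [DecidableEq m] [DecidableEq l] (e : m ≃ l)
    (b : m) : (Pi.single (e b) 1 : l → ℝ) = (Pi.single b 1) ∘ e.symm := by
  funext i
  simp [Pi.single_apply, Function.comp, Equiv.symm_apply_eq]

lemma single_sum {m : Type} [DecidableEq m] (q0 : m) :
    (Pi.single (Sum.inl q0) 1 : m ⊕ m → ℝ) = Sum.elim (Pi.single q0 1) 0 := by
  funext i
  rcases i with j | j <;> simp [Pi.single_apply]

lemma dollar_block {n : ℕ} (M : Matrix (Fin n) (Fin n) ℝ) (t : ℝ) (x : Fin n → ℝ) :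
    (t • fromBlocks M 0 0 M + (1 - t) • fromBlocks (0 : Matrix (Fin n) (Fin n) ℝ) 1 1 0)
        *ᵥ (Sum.elim x 0)
      = Sum.elim (t • (M *ᵥ x)) ((1 - t) • x) := by
  rw [add_mulVec, smul_mulVec, smul_mulVec, fromBlocks_mulVec, fromBlocks_mulVec]
  funext i; rcases i with j | j <;> simp

namespace PRAC

variable {α : Type}

def embL (n : ℕ) : Fin n ↪ Fin (n + n) :=
  ⟨fun q => finSumFinEquiv (Sum.inl q), fun a b h => by simpa using finSumFinEquiv.injective h⟩

def embR (n : ℕ) : Fin n ↪ Fin (n + n) :=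
  ⟨fun q => finSumFinEquiv (Sum.inr q), fun a b h => by simpa using finSumFinEquiv.injective h⟩

/-- Doubled-state automaton: runs `A` on the first block; the `$`-matrix is, with
probability `t`, `A`'s `$`-matrix (block-diagonally), and with probability `1-t`
the swap of the two blocks. -/
noncomputable def scale (A : PRAC α) (t : ℝ) (ht0 : 0 ≤ t) (ht1 : t ≤ 1) (b : Bool) :
    PRAC α where
  n := A.n + A.n
  q0 := finSumFinEquiv (Sum.inl A.q0)
  F := if b then (A.F.map (embL A.n)) ∪ (Finset.univ.map (embR A.n))
    else A.F.map (embL A.n)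
  V a := (fromBlocks (A.V a) 0 0 (A.V a)).submatrix finSumFinEquiv.symm finSumFinEquiv.symm
  Vhash := (fromBlocks A.Vhash 0 0 A.Vhash).submatrix finSumFinEquiv.symm finSumFinEquiv.symm
  Vdollar := (t • fromBlocks A.Vdollar 0 0 A.Vdollar +
      (1 - t) • fromBlocks (0 : Matrix (Fin A.n) (Fin A.n) ℝ) 1 1 0).submatrix
      finSumFinEquiv.symm finSumFinEquiv.symm
  ds a := ds'_to_ds (ds'_submatrix finSumFinEquiv.symm (ds'_fromBlocks (A.ds a) (A.ds a)))
  ds_hash := ds'_to_ds (ds'_submatrix finSumFinEquiv.symm (ds'_fromBlocks A.ds_hash A.ds_hash))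
  ds_dollar := ds'_to_ds (ds'_submatrix finSumFinEquiv.symm
    (ds'_convex ht0 ht1 (ds'_fromBlocks A.ds_dollar A.ds_dollar) ds'_swap))

lemma key_mulVec {m l : Type} [Fintype m] [Fintype l] (e : m ≃ l) (P : Matrix m m ℝ)
    (v : m → ℝ) :
    (P.submatrix e.symm e.symm) *ᵥ (v ∘ e.symm) = (P *ᵥ v) ∘ e.symm := by
  rw [submatrix_mulVec_equiv]
  simp [Function.comp_assoc, Equiv.symm_comp_self]

lemma sum_mulVec_of_ds {n : ℕ} {M : Matrix (Fin n) (Fin n) ℝ} (hM : DoublyStochastic M)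
    (v : Fin n → ℝ) : ∑ i, (M *ᵥ v) i = ∑ j, v j := by
  simp only [mulVec, dotProduct]
  rw [Finset.sum_comm]
  simp [← Finset.sum_mul, fun j => hM.2.2 j]

lemma sum_foldl (A : PRAC α) (w : List α) (v : Fin A.n → ℝ) :
    ∑ i, (w.foldl (fun u a => (A.V a) *ᵥ u) v) i = ∑ j, v j := by
  induction w generalizing v with
  | nil => rfl
  | cons a w ih => rw [List.foldl_cons, ih, sum_mulVec_of_ds (A.ds a)]

lemma foldl_scale (A : PRAC α) (t : ℝ) (ht0 : 0 ≤ t) (ht1 : t ≤ 1) (b : Bool)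
    (w : List α) (v : Fin A.n → ℝ) :
    w.foldl (fun u a => ((A.scale t ht0 ht1 b).V a) *ᵥ u) (Sum.elim v 0 ∘ finSumFinEquiv.symm)
      = Sum.elim (w.foldl (fun u a => (A.V a) *ᵥ u) v) 0 ∘ finSumFinEquiv.symm := by
  induction w generalizing v with
  | nil => rfl
  | cons a w ih =>
    rw [List.foldl_cons, List.foldl_cons, ← ih ((A.V a) *ᵥ v)]
    congr 1
    show (fromBlocks (A.V a) 0 0 (A.V a)).submatrix finSumFinEquiv.symm finSumFinEquiv.symm
        *ᵥ (Sum.elim v 0 ∘ finSumFinEquiv.symm) = _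
    rw [key_mulVec, blockdiag_mulVec]
    rfl

lemma accProb_scale (A : PRAC α) (t : ℝ) (ht0 : 0 ≤ t) (ht1 : t ≤ 1) (b : Bool)
    (w : List α) :
    (A.scale t ht0 ht1 b).accProb w = t * A.accProb w + if b then (1 - t) else 0 := by
  classical
  set e : Fin A.n ⊕ Fin A.n ≃ Fin (A.n + A.n) := finSumFinEquiv
  have hsingle : (Pi.single ((A.scale t ht0 ht1 b).q0) 1 : Fin (A.n + A.n) → ℝ)
      = Sum.elim (Pi.single A.q0 1) 0 ∘ e.symm := by
    rw [show (A.scale t ht0 ht1 b).q0 = e (Sum.inl A.q0) from rfl, single_comp, single_sum]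
  have hhash : (A.scale t ht0 ht1 b).Vhash *ᵥ (Pi.single ((A.scale t ht0 ht1 b).q0) 1)
      = Sum.elim (A.Vhash *ᵥ (Pi.single A.q0 1)) 0 ∘ e.symm := by
    erw [hsingle]
    show (fromBlocks A.Vhash 0 0 A.Vhash).submatrix e.symm e.symm *ᵥ _ = _
    rw [key_mulVec, blockdiag_mulVec]
  set x : Fin A.n → ℝ :=
      w.foldl (fun u a => (A.V a) *ᵥ u) (A.Vhash *ᵥ (Pi.single A.q0 1)) with hx
  have hsumx : ∑ j, x j = 1 := by
    rw [hx, sum_foldl, sum_mulVec_of_ds A.ds_hash]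
    simp
  have hrun : w.foldl (fun u a => ((A.scale t ht0 ht1 b).V a) *ᵥ u)
      ((A.scale t ht0 ht1 b).Vhash *ᵥ (Pi.single ((A.scale t ht0 ht1 b).q0) 1))
      = Sum.elim x 0 ∘ e.symm := by
    erw [hhash, foldl_scale]
  have hdollar : (A.scale t ht0 ht1 b).Vdollar *ᵥ (Sum.elim x 0 ∘ e.symm)
      = Sum.elim (t • (A.Vdollar *ᵥ x)) ((1 - t) • x) ∘ e.symm := by
    show (t • fromBlocks A.Vdollar 0 0 A.Vdollar +
        (1 - t) • fromBlocks (0 : Matrix (Fin A.n) (Fin A.n) ℝ) 1 1 0).submatrix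
        e.symm e.symm *ᵥ _ = _
    erw [key_mulVec, dollar_block]
  unfold accProb
  erw [hrun, hdollar]
  have hL : ∀ q : Fin A.n,
      (Sum.elim (t • (A.Vdollar *ᵥ x)) ((1 - t) • x) ∘ e.symm) (embL A.n q)
        = t * (A.Vdollar *ᵥ x) q := by
    intro q
    show Sum.elim _ _ (e.symm (e (Sum.inl q))) = _
    rw [Equiv.symm_apply_apply]; simp
  have hR : ∀ q : Fin A.n,
      (Sum.elim (t • (A.Vdollar *ᵥ x)) ((1 - t) • x) ∘ e.symm) (embR A.n q)
        = (1 - t) * x q := by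
    intro q
    show Sum.elim _ _ (e.symm (e (Sum.inr q))) = _
    rw [Equiv.symm_apply_apply]; simp
  by_cases hb : b = true
  · subst hb
    have hdisj : Disjoint (A.F.map (embL A.n)) (Finset.univ.map (embR A.n)) := by
      simp only [Finset.disjoint_left, Finset.mem_map]
      rintro q ⟨a, _, rfl⟩ ⟨c, _, hc⟩
      exact Sum.inr_ne_inl (finSumFinEquiv.injective hc)
    show (∑ q ∈ (A.F.map (embL A.n)) ∪ (Finset.univ.map (embR A.n)),
        (Sum.elim (t • (A.Vdollar *ᵥ x)) ((1 - t) • x) ∘ e.symm) q) = _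
    rw [Finset.sum_union hdisj, Finset.sum_map, Finset.sum_map,
      Finset.sum_congr rfl (fun q _ => hL q), Finset.sum_congr rfl (fun q _ => hR q),
      ← Finset.mul_sum, ← Finset.mul_sum, hsumx]
    simp [accProb, hx]
  · rw [Bool.not_eq_true] at hb
    subst hb
    show (∑ q ∈ A.F.map (embL A.n),
        (Sum.elim (t • (A.Vdollar *ᵥ x)) ((1 - t) • x) ∘ e.symm) q) = _
    rw [Finset.sum_map, Finset.sum_congr rfl (fun q _ => hL q), ← Finset.mul_sum]
    simp [accProb, hx]

end PRAC

/-- If a language is recognized by a PRA-C with interval `(p₁,p₂)`, then there exists a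
PRA-C which recognizes the language with probability `p₂/(p₁+p₂)` if `p₁+p₂ ≥ 1`, and
with probability `(1-p₁)/(2-p₁-p₂)` if `p₁+p₂ < 1`. -/
theorem prac_interval_to_prob {α : Type} (L : Set (List α)) (A : PRAC α) (p1 p2 : ℝ)
    (h : A.Recognizes L p1 p2) :
    ∃ B : PRAC α, B.RecognizesWithProb L
      (if 1 ≤ p1 + p2 then p2 / (p1 + p2) else (1 - p1) / (2 - p1 - p2)) := by
  obtain ⟨hp1, hp12, hp21, hacc, hrej⟩ := h
  have hp2pos : 0 < p2 := lt_of_le_of_lt hp1 hp12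
  by_cases hs : 1 ≤ p1 + p2
  · -- t = 1/(p1+p2), no extra accepting states
    have hspos : 0 < p1 + p2 := by linarith
    have ht0 : (0:ℝ) ≤ 1 / (p1 + p2) := by positivity
    have ht1 : 1 / (p1 + p2) ≤ 1 := by
      rw [div_le_one hspos]; linarith
    refine ⟨A.scale (1 / (p1 + p2)) ht0 ht1 false, ?_, ?_, ?_, ?_, ?_⟩ <;> rw [if_pos hs]
    · rw [sub_nonneg, div_le_one hspos]; linarith
    · rw [sub_lt_iff_lt_add, ← add_div, lt_div_iff₀ hspos]; linarith
    · rw [div_le_one hspos]; linarith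
    · intro w hw
      rw [A.accProb_scale (1 / (p1 + p2)) ht0 ht1 false w]
      simp only [Bool.false_eq_true, if_false, add_zero]
      rw [div_le_iff₀ hspos]
      have h3 : 1 / (p1 + p2) * A.accProb w * (p1 + p2) = A.accProb w := by field_simp
      rw [h3]; exact hacc w hw
    · intro w hw
      rw [A.accProb_scale (1 / (p1 + p2)) ht0 ht1 false w]
      simp only [Bool.false_eq_true, if_false, add_zero]
      have h1 : 1 - p2 / (p1 + p2) = p1 / (p1 + p2) := by field_simp; ring
      rw [h1, le_div_iff₀ hspos]
      have h3 : 1 / (p1 + p2) * A.accProb w * (p1 + p2) = A.accProb w := by field_simp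
      rw [h3]; exact hrej w hw
  · -- t = 1/(2 - p1 - p2), extra accepting states
    push_neg at hs
    have hdpos : 0 < 2 - p1 - p2 := by linarith
    have ht0 : (0:ℝ) ≤ 1 / (2 - p1 - p2) := by positivity
    have ht1 : 1 / (2 - p1 - p2) ≤ 1 := by
      rw [div_le_one hdpos]; linarith
    refine ⟨A.scale (1 / (2 - p1 - p2)) ht0 ht1 true, ?_, ?_, ?_, ?_, ?_⟩ <;>
      rw [if_neg (not_le.mpr hs)]
    · rw [sub_nonneg, div_le_one hdpos]; linarith
    · rw [sub_lt_iff_lt_add, ← add_div, lt_div_iff₀ hdpos]; linarith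
    · rw [div_le_one hdpos]; linarith
    · intro w hw
      rw [A.accProb_scale (1 / (2 - p1 - p2)) ht0 ht1 true w]
      norm_num
      rw [div_le_iff₀ hdpos]
      have h3 : ((2 - p1 - p2)⁻¹ * A.accProb w + (1 - (2 - p1 - p2)⁻¹)) * (2 - p1 - p2)
          = A.accProb w + (1 - p1 - p2) := by field_simp; ring
      rw [h3]
      have := hacc w hw
      linarith
    · intro w hw
      rw [A.accProb_scale (1 / (2 - p1 - p2)) ht0 ht1 true w]
      norm_num
      have h1 : 1 - (1 - p1) / (2 - p1 - p2) = (1 - p2) / (2 - p1 - p2) := by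
        field_simp; ring
      rw [h1, le_div_iff₀ hdpos]
      have h3 : ((2 - p1 - p2)⁻¹ * A.accProb w + (1 - (2 - p1 - p2)⁻¹)) * (2 - p1 - p2)
          = A.accProb w + (1 - p1 - p2) := by field_simp; ring
      rw [h3]
      have := hrej w hw
      linarith
end

section
/- If a language L ⊆ Σ* is recognized by some PRA-C with some interval (p₁,p₂), then for every ε > 0 there exists a PRA-C which recognizes L with interval (ε₁, 1−ε₂) for some ε₁, ε₂ ≤ ε. -/
namespace PRACaux

open Finset

variable {n k : ℕ}

/-- The encoding equivalence between tuples of states and states of the product automaton. -/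
def E (n k : ℕ) : (Fin k → Fin n) ≃ Fin (n ^ k) := finFunctionFinEquiv

/-- Tensor power of a vector. -/
def tens (k : ℕ) (v : Fin n → ℝ) : Fin (n ^ k) → ℝ :=
  fun i => ∏ t, v ((E n k).symm i t)

/-- Tensor power of a matrix. -/
def tensM (k : ℕ) (M : Matrix (Fin n) (Fin n) ℝ) :
    Matrix (Fin (n ^ k)) (Fin (n ^ k)) ℝ :=
  fun i j => ∏ t, M ((E n k).symm i t) ((E n k).symm j t)

lemma sum_tens_prod (g : Fin k → Fin n → ℝ) :
    ∑ f : Fin k → Fin n, ∏ t, g t (f t) = ∏ t, ∑ q, g t q := by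
  rw [Finset.prod_univ_sum]
  simp

lemma sum_fin_pow (h : Fin (n ^ k) → ℝ) :
    ∑ i, h i = ∑ f : Fin k → Fin n, h (E n k f) :=
  (Equiv.sum_comp (E n k) h).symm

lemma tensM_mulVec (M : Matrix (Fin n) (Fin n) ℝ) (v : Fin n → ℝ) :
    (tensM k M).mulVec (tens k v) = tens k (M.mulVec v) := by
  funext i
  show ∑ j, tensM k M i j * tens k v j = _
  rw [sum_fin_pow (fun j => tensM k M i j * tens k v j)]
  simp only [tensM, tens, Equiv.symm_apply_apply]
  have : ∀ f : Fin k → Fin n,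
      (∏ t, M ((E n k).symm i t) (f t)) * ∏ t, v (f t)
        = ∏ t, (M ((E n k).symm i t) (f t) * v (f t)) := by
    intro f; rw [Finset.prod_mul_distrib]
  rw [Finset.sum_congr rfl (fun f _ => this f),
    sum_tens_prod (fun t q => M ((E n k).symm i t) q * v q)]
  rfl

lemma tensM_ds {M : Matrix (Fin n) (Fin n) ℝ} (h : DoublyStochastic M) :
    DoublyStochastic (tensM k M) := by
  obtain ⟨h0, hr, hc⟩ := h
  refine ⟨fun i j => Finset.prod_nonneg fun t _ => h0 _ _, fun i => ?_, fun j => ?_⟩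
  · rw [sum_fin_pow (fun j => tensM k M i j)]
    simp only [tensM, Equiv.symm_apply_apply]
    rw [sum_tens_prod (fun t q => M ((E n k).symm i t) q)]
    simp [hr]
  · rw [sum_fin_pow (fun i => tensM k M i j)]
    simp only [tensM, Equiv.symm_apply_apply]
    rw [sum_tens_prod (fun t q => M q ((E n k).symm j t))]
    simp [hc]

lemma tens_single (q0 : Fin n) :
    tens k (Pi.single q0 (1:ℝ)) = Pi.single (E n k (fun _ => q0)) (1:ℝ) := by
  funext i
  rw [Pi.single_apply]
  rcases eq_or_ne i (E n k fun _ => q0) with hi | hi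
  · rw [if_pos hi]; subst hi
    simp [tens, Pi.single_apply]
  · rw [if_neg hi]
    obtain ⟨t, ht⟩ : ∃ t, (E n k).symm i t ≠ q0 := by
      by_contra hc; push_neg at hc
      exact hi (by
        rw [← Equiv.apply_symm_apply (E n k) i]
        exact congrArg (E n k) (funext hc))
    exact Finset.prod_eq_zero (mem_univ t) (by simp [Pi.single_apply, ht])

/-- Weight of a tuple of states. -/
def W (k : ℕ) (v : Fin n → ℝ) (f : Fin k → Fin n) : ℝ := ∏ t, v (f t)

/-- Number of accepting coordinates of a tuple, as a real. -/
def X (S : Finset (Fin n)) (f : Fin k → Fin n) : ℝ :=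
  ∑ t, if f t ∈ S then (1:ℝ) else 0

variable {v : Fin n → ℝ} {S : Finset (Fin n)}

lemma key_moment (h1 : ∑ q, v q = 1) (T : Finset (Fin k)) :
    ∑ f : Fin k → Fin n, W k v f * ∏ t ∈ T, (if f t ∈ S then (1:ℝ) else 0)
      = (∑ q ∈ S, v q) ^ T.card := by
  have step : ∀ f : Fin k → Fin n,
      W k v f * ∏ t ∈ T, (if f t ∈ S then (1:ℝ) else 0)
        = ∏ t, (if t ∈ T then (if f t ∈ S then v (f t) else 0) else v (f t)) := by
    intro f
    have : ∀ t : Fin k,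
        (if t ∈ T then (if f t ∈ S then v (f t) else 0) else v (f t))
          = v (f t) * (if t ∈ T then (if f t ∈ S then (1:ℝ) else 0) else 1) := by
      intro t; split_ifs <;> ring
    rw [Finset.prod_congr rfl (fun t _ => this t), Finset.prod_mul_distrib,
      Finset.prod_ite_mem, Finset.univ_inter]
    rfl
  rw [Finset.sum_congr rfl (fun f _ => step f),
    sum_tens_prod (fun t q => if t ∈ T then (if q ∈ S then v q else 0) else v q)]
  have : ∀ t : Fin k, (∑ q, if t ∈ T then (if q ∈ S then v q else 0) else v q)
      = if t ∈ T then (∑ q ∈ S, v q) else 1 := by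
    intro t
    split_ifs with ht
    · simp [Finset.sum_ite_mem]
    · exact h1
  rw [Finset.prod_congr rfl (fun t _ => this t), Finset.prod_ite_mem, Finset.univ_inter,
    Finset.prod_const]

lemma moment_zero (h1 : ∑ q, v q = 1) :
    ∑ f : Fin k → Fin n, W k v f = 1 := by
  have := key_moment (S := (∅ : Finset (Fin n))) (k := k) h1 (∅ : Finset (Fin k))
  simpa using this

lemma moment_one (h1 : ∑ q, v q = 1) :
    ∑ f : Fin k → Fin n, W k v f * X S f = (k : ℝ) * (∑ q ∈ S, v q) := by
  have : ∀ f : Fin k → Fin n, W k v f * X S f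
      = ∑ t, W k v f * ∏ s ∈ ({t} : Finset (Fin k)), (if f s ∈ S then (1:ℝ) else 0) := by
    intro f; rw [X, Finset.mul_sum]; simp
  rw [Finset.sum_congr rfl (fun f _ => this f), Finset.sum_comm]
  rw [Finset.sum_congr rfl (fun t _ => key_moment h1 {t})]
  simp [mul_comm]

lemma moment_two (h1 : ∑ q, v q = 1) :
    ∑ f : Fin k → Fin n, W k v f * (X S f) ^ 2
      = (k : ℝ) * (∑ q ∈ S, v q) + ((k:ℝ)^2 - k) * (∑ q ∈ S, v q) ^ 2 := by
  set p := ∑ q ∈ S, v q with hp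
  have expand : ∀ f : Fin k → Fin n, W k v f * (X S f) ^ 2
      = ∑ t, ∑ t', W k v f *
          ((if f t ∈ S then (1:ℝ) else 0) * (if f t' ∈ S then (1:ℝ) else 0)) := by
    intro f
    rw [X, sq, Finset.sum_mul_sum]
    rw [Finset.mul_sum]
    exact Finset.sum_congr rfl fun t _ => by rw [Finset.mul_sum]
  rw [Finset.sum_congr rfl (fun f _ => expand f), Finset.sum_comm]
  rw [Finset.sum_congr rfl (fun t _ => Finset.sum_comm)]
  have inner : ∀ t : Fin k,
      ∑ t', ∑ f : Fin k → Fin n, W k v f *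
          ((if f t ∈ S then (1:ℝ) else 0) * (if f t' ∈ S then (1:ℝ) else 0))
        = ∑ t' : Fin k, (if t = t' then p else p ^ 2) := by
    intro t
    refine Finset.sum_congr rfl fun t' _ => ?_
    rcases eq_or_ne t t' with h | h
    · subst h
      rw [if_pos rfl]
      have : ∀ f : Fin k → Fin n,
          W k v f * ((if f t ∈ S then (1:ℝ) else 0) * (if f t ∈ S then (1:ℝ) else 0))
            = W k v f * ∏ s ∈ ({t} : Finset (Fin k)), (if f s ∈ S then (1:ℝ) else 0) := by
        intro f; congr 1; rw [Finset.prod_singleton]; split_ifs <;> norm_num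
      rw [Finset.sum_congr rfl (fun f _ => this f), key_moment h1 {t}]
      simp [hp]
    · rw [if_neg h]
      have : ∀ f : Fin k → Fin n,
          W k v f * ((if f t ∈ S then (1:ℝ) else 0) * (if f t' ∈ S then (1:ℝ) else 0))
            = W k v f * ∏ s ∈ ({t, t'} : Finset (Fin k)), (if f s ∈ S then (1:ℝ) else 0) := by
        intro f; rw [Finset.prod_pair h]
      rw [Finset.sum_congr rfl (fun f _ => this f), key_moment h1 {t, t'},
        Finset.card_pair h]
  rw [Finset.sum_congr rfl (fun t _ => inner t)]
  have : ∀ t : Fin k, ∑ t' : Fin k, (if t = t' then p else p ^ 2)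
      = p + ((k:ℝ) - 1) * p ^ 2 := by
    intro t
    have : ∀ t' : Fin k, (if t = t' then p else p ^ 2)
        = p ^ 2 + (if t = t' then p - p ^ 2 else 0) := by
      intro t'; split_ifs <;> ring
    rw [Finset.sum_congr rfl (fun t' _ => this t'), Finset.sum_add_distrib,
      Finset.sum_const, Finset.sum_ite_eq univ t (fun _ => p - p^2), if_pos (mem_univ t)]
    simp [Finset.card_univ]
    ring
  rw [Finset.sum_congr rfl (fun t _ => this t), Finset.sum_const]
  simp [Finset.card_univ]
  ring

lemma variance_eq (h1 : ∑ q, v q = 1) :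
    ∑ f : Fin k → Fin n, W k v f * (X S f - k * (∑ q ∈ S, v q)) ^ 2
      = (k : ℝ) * (∑ q ∈ S, v q) * (1 - (∑ q ∈ S, v q)) := by
  set p := ∑ q ∈ S, v q with hp
  have expand : ∀ f : Fin k → Fin n,
      W k v f * (X S f - k * p) ^ 2
        = W k v f * (X S f)^2 - (2 * ((k:ℝ)*p)) * (W k v f * X S f)
            + ((k:ℝ)*p)^2 * W k v f := by
    intro f; ring
  rw [Finset.sum_congr rfl (fun f _ => expand f), Finset.sum_add_distrib,
    Finset.sum_sub_distrib, ← Finset.mul_sum, ← Finset.mul_sum,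
    moment_two h1, moment_one h1, moment_zero h1]
  ring

lemma W_nonneg (h0 : ∀ q, 0 ≤ v q) (f : Fin k → Fin n) : 0 ≤ W k v f :=
  Finset.prod_nonneg fun _ _ => h0 _

lemma tail_bound (h0 : ∀ q, 0 ≤ v q) (h1 : ∑ q, v q = 1)
    {P : (Fin k → Fin n) → Prop} [DecidablePred P] {δ : ℝ} (hδ : 0 < δ) (hk : 0 < k)
    (hP : ∀ f, P f → ((k:ℝ) * δ) ^ 2 ≤ (X S f - k * (∑ q ∈ S, v q)) ^ 2) :
    ∑ f ∈ univ.filter P, W k v f ≤ 1 / (4 * k * δ ^ 2) := by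
  set p := ∑ q ∈ S, v q with hp
  have hp0 : 0 ≤ p := Finset.sum_nonneg fun q _ => h0 q
  have hp1 : p ≤ 1 := by
    rw [hp, ← h1]
    exact Finset.sum_le_sum_of_subset_of_nonneg (Finset.subset_univ S)
      (fun q _ _ => h0 q)
  have hkR : (0:ℝ) < k := by exact_mod_cast hk
  have h₁ : ((k:ℝ) * δ) ^ 2 * ∑ f ∈ univ.filter P, W k v f
      ≤ ∑ f ∈ univ.filter P, W k v f * (X S f - k * p) ^ 2 := by
    rw [Finset.mul_sum]
    refine Finset.sum_le_sum fun f hf => ?_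
    have hb := hP f (Finset.mem_filter.mp hf).2
    rw [mul_comm]
    exact mul_le_mul_of_nonneg_left hb (W_nonneg h0 f)
  have h₂ : ∑ f ∈ univ.filter P, W k v f * (X S f - k * p) ^ 2
      ≤ ∑ f : Fin k → Fin n, W k v f * (X S f - k * p) ^ 2 :=
    Finset.sum_le_sum_of_subset_of_nonneg (Finset.filter_subset _ _)
      (fun f _ _ => mul_nonneg (W_nonneg h0 f) (sq_nonneg _))
  have h₃ : ∑ f : Fin k → Fin n, W k v f * (X S f - k * p) ^ 2 ≤ (k:ℝ) / 4 := by
    rw [variance_eq h1]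
    nlinarith [sq_nonneg (p - 1/2)]
  have hchain : ((k:ℝ) * δ) ^ 2 * ∑ f ∈ univ.filter P, W k v f ≤ (k:ℝ) / 4 :=
    le_trans h₁ (le_trans h₂ h₃)
  rw [le_div_iff₀ (by positivity)]
  nlinarith [hchain, mul_pos hkR (mul_pos hkR (mul_pos hδ hδ))]

-- distribution invariants

lemma mulVec_nonneg {m : ℕ} {M : Matrix (Fin m) (Fin m) ℝ} (hM : DoublyStochastic M)
    {u : Fin m → ℝ} (hu : ∀ q, 0 ≤ u q) : ∀ q, 0 ≤ M.mulVec u q := by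
  intro q
  simp only [Matrix.mulVec, dotProduct]
  exact Finset.sum_nonneg fun j _ => mul_nonneg (hM.1 q j) (hu j)

lemma mulVec_sum {m : ℕ} {M : Matrix (Fin m) (Fin m) ℝ} (hM : DoublyStochastic M)
    {u : Fin m → ℝ} (hu : ∑ q, u q = 1) : ∑ q, M.mulVec u q = 1 := by
  simp only [Matrix.mulVec, dotProduct]
  rw [Finset.sum_comm]
  have : ∀ j, ∑ i, M i j * u j = u j := by
    intro j; rw [← Finset.sum_mul, hM.2.2 j, one_mul]
  rw [Finset.sum_congr rfl (fun j _ => this j), hu]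

/-- A probability distribution. -/
def IsDist {m : ℕ} (u : Fin m → ℝ) : Prop := (∀ q, 0 ≤ u q) ∧ ∑ q, u q = 1

lemma isDist_mulVec {m : ℕ} {M : Matrix (Fin m) (Fin m) ℝ} (hM : DoublyStochastic M)
    {u : Fin m → ℝ} (hu : IsDist u) : IsDist (M.mulVec u) :=
  ⟨mulVec_nonneg hM hu.1, mulVec_sum hM hu.2⟩

variable {α : Type}

lemma isDist_foldl {m : ℕ} (Vs : α → Matrix (Fin m) (Fin m) ℝ)
    (hds : ∀ a, DoublyStochastic (Vs a)) (w : List α) :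
    ∀ u : Fin m → ℝ, IsDist u → IsDist (w.foldl (fun v a => (Vs a).mulVec v) u) := by
  induction w with
  | nil => intro u hu; exact hu
  | cons a w ih =>
    intro u hu
    exact ih _ (isDist_mulVec (hds a) hu)

/-- The distribution of the automaton after processing a whole word (with end-markers). -/
def finalVec (A : PRAC α) (w : List α) : Fin A.n → ℝ :=
  A.Vdollar.mulVec
    (w.foldl (fun v a => (A.V a).mulVec v) (A.Vhash.mulVec (Pi.single A.q0 1)))

lemma accProb_eq_finalVec (A : PRAC α) (w : List α) :
    A.accProb w = ∑ q ∈ A.F, finalVec A w q := rfl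

lemma isDist_single {m : ℕ} (q0 : Fin m) : IsDist (Pi.single q0 (1:ℝ)) := by
  constructor
  · intro q; rw [Pi.single_apply]; split_ifs <;> norm_num
  · simp [Pi.single_apply]

lemma isDist_finalVec (A : PRAC α) (w : List α) : IsDist (finalVec A w) :=
  isDist_mulVec A.ds_dollar
    (isDist_foldl A.V A.ds w _ (isDist_mulVec A.ds_hash (isDist_single A.q0)))

lemma foldl_tens (A : PRAC α) (k : ℕ) (w : List α) :
    ∀ u : Fin A.n → ℝ,
      w.foldl (fun v a => (tensM k (A.V a)).mulVec v) (tens k u)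
        = tens k (w.foldl (fun v a => (A.V a).mulVec v) u) := by
  induction w with
  | nil => intro u; rfl
  | cons a w ih =>
    intro u
    simp only [List.foldl_cons]
    rw [tensM_mulVec]
    exact ih _

/-- The amplified automaton: `k` independent copies of `A`, accepting iff at least
`θ·k` copies accept. -/
noncomputable def Bk (A : PRAC α) (k : ℕ) (θ : ℝ) : PRAC α where
  n := A.n ^ k
  q0 := E A.n k (fun _ => A.q0)
  F := Finset.univ.filter (fun i => θ * k ≤ X A.F ((E A.n k).symm i))
  V a := tensM k (A.V a)
  Vhash := tensM k A.Vhash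
  Vdollar := tensM k A.Vdollar
  ds a := tensM_ds (A.ds a)
  ds_hash := tensM_ds A.ds_hash
  ds_dollar := tensM_ds A.ds_dollar

lemma finalVec_Bk (A : PRAC α) (k : ℕ) (θ : ℝ) (w : List α) :
    finalVec (Bk A k θ) w = tens k (finalVec A w) := by
  show (tensM k A.Vdollar).mulVec
      (w.foldl (fun v a => (tensM k (A.V a)).mulVec v)
        ((tensM k A.Vhash).mulVec (Pi.single (E A.n k (fun _ => A.q0)) 1))) = _
  rw [← tens_single A.q0, tensM_mulVec, foldl_tens, tensM_mulVec]
  rfl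

lemma accProb_Bk (A : PRAC α) (k : ℕ) (θ : ℝ) (w : List α) :
    (Bk A k θ).accProb w
      = ∑ f ∈ Finset.univ.filter (fun f : Fin k → Fin A.n => θ * k ≤ X A.F f),
          W k (finalVec A w) f := by
  rw [accProb_eq_finalVec, finalVec_Bk]
  show ∑ i ∈ Finset.univ.filter (fun i => θ * k ≤ X A.F ((E A.n k).symm i)),
      tens k (finalVec A w) i = _
  refine Finset.sum_equiv (E A.n k).symm (fun i => ?_) (fun i _ => rfl)
  simp

end PRACaux

open PRACaux Finset

/-- If a language is recognized by a PRA-C, then for every `ε > 0` it is recognized by some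
PRA-C with interval `(ε₁, 1-ε₂)` where `ε₁, ε₂ ≤ ε`. -/
theorem prac_recognizes_one_minus_eps {α : Type} (L : Set (List α)) (A : PRAC α)
    (p1 p2 : ℝ) (h : A.Recognizes L p1 p2) :
    ∀ ε : ℝ, 0 < ε → ∃ (B : PRAC α) (ε1 ε2 : ℝ), ε1 ≤ ε ∧ ε2 ≤ ε ∧
      B.Recognizes L ε1 (1 - ε2) := by
  obtain ⟨hp1, hlt, hp2, hin, hout⟩ := h
  intro ε hε
  set ε' := min ε (1/4) with hε'def
  have hε'pos : 0 < ε' := lt_min hε (by norm_num)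
  have hε'le : ε' ≤ ε := min_le_left _ _
  have hε'14 : ε' ≤ 1/4 := min_le_right _ _
  set δ := (p2 - p1) / 2 with hδdef
  set θ := (p1 + p2) / 2 with hθdef
  have hδpos : 0 < δ := by rw [hδdef]; linarith
  set k := ⌈1 / (4 * ε' * δ ^ 2)⌉₊ + 1 with hkdef
  have hk : 0 < k := Nat.succ_pos _
  have hkR : (0:ℝ) < k := by exact_mod_cast hk
  have hbound : 1 / (4 * k * δ ^ 2) ≤ ε' := by
    have h1 : 1 / (4 * ε' * δ ^ 2) ≤ (k : ℝ) := by
      calc 1 / (4 * ε' * δ ^ 2) ≤ (⌈1 / (4 * ε' * δ ^ 2)⌉₊ : ℝ) := Nat.le_ceil _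
        _ ≤ (k : ℝ) := by rw [hkdef]; push_cast; linarith
    rw [div_le_iff₀ (by positivity)] at h1 ⊢
    nlinarith [hε'pos, hδpos, hkR]
  refine ⟨Bk A k θ, ε', ε', hε'le, hε'le, le_of_lt hε'pos, by linarith, by linarith,
    ?_, ?_⟩
  · -- words in L are accepted with probability ≥ 1 - ε'
    intro w hw
    obtain ⟨hv0, hv1⟩ := isDist_finalVec A w
    have hpw : p2 ≤ ∑ q ∈ A.F, finalVec A w q := by
      rw [← accProb_eq_finalVec]; exact hin w hw
    rw [accProb_Bk]
    have hsplit := Finset.sum_filter_add_sum_filter_not Finset.univ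
      (fun f : Fin k → Fin A.n => θ * k ≤ X A.F f) (W k (finalVec A w))
    rw [moment_zero hv1] at hsplit
    have htail : ∑ f ∈ Finset.univ.filter
        (fun f : Fin k → Fin A.n => ¬ θ * k ≤ X A.F f), W k (finalVec A w) f
          ≤ 1 / (4 * k * δ ^ 2) := by
      refine tail_bound (S := A.F) hv0 hv1 hδpos hk ?_
      intro f hf
      push_neg at hf
      set p := ∑ q ∈ A.F, finalVec A w q
      have h1 : X A.F f - k * p ≤ -((k:ℝ) * δ) := by
        have : θ + δ = p2 := by rw [hθdef, hδdef]; ring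
        nlinarith
      have h2 : 0 ≤ (k:ℝ) * δ := le_of_lt (mul_pos hkR hδpos)
      nlinarith [h1, h2]
    linarith
  · -- words not in L are accepted with probability ≤ ε'
    intro w hw
    obtain ⟨hv0, hv1⟩ := isDist_finalVec A w
    have hpw : ∑ q ∈ A.F, finalVec A w q ≤ p1 := by
      rw [← accProb_eq_finalVec]; exact hout w hw
    rw [accProb_Bk]
    have htail : ∑ f ∈ Finset.univ.filter
        (fun f : Fin k → Fin A.n => θ * k ≤ X A.F f), W k (finalVec A w) f
          ≤ 1 / (4 * k * δ ^ 2) := by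
      refine tail_bound (S := A.F) hv0 hv1 hδpos hk ?_
      intro f hf
      set p := ∑ q ∈ A.F, finalVec A w q
      have h1 : (k:ℝ) * δ ≤ X A.F f - k * p := by
        have : θ - δ = p1 := by rw [hθdef, hδdef]; ring
        nlinarith
      have h2 : 0 ≤ (k:ℝ) * δ := le_of_lt (mul_pos hkR hδpos)
      nlinarith [h1, h2]
    linarith
end

section
/- If a language L₁ ⊆ Σ* is recognized by a PRA-C with probability p₁ > 2/3 and a language L₂ ⊆ Σ* is recognized by a PRA-C with probability p₂ > 2/3, then each of the languages L₁ ∩ L₂ and L₁ ∪ L₂ is recognized by some PRA-C with probability strictly greater than 1/2. -/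
open Matrix Finset Kronecker

set_option linter.unusedSectionVars false
set_option maxHeartbeats 1000000

namespace PRACaux

variable {α : Type} {Q R : Type} [Fintype Q] [DecidableEq Q] [Fintype R] [DecidableEq R]

def DS (A : Matrix Q Q ℝ) : Prop :=
  (∀ i j, 0 ≤ A i j) ∧ (∀ i, ∑ j, A i j = 1) ∧ (∀ j, ∑ i, A i j = 1)

lemma DS.mul {A B : Matrix Q Q ℝ} (hA : DS A) (hB : DS B) : DS (A * B) := by
  obtain ⟨hA0, hAr, hAc⟩ := hA
  obtain ⟨hB0, hBr, hBc⟩ := hB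
  refine ⟨fun i j => ?_, fun i => ?_, fun j => ?_⟩
  · exact Finset.sum_nonneg fun k _ => mul_nonneg (hA0 _ _) (hB0 _ _)
  · rw [show ∑ j, (A * B) i j = ∑ j, ∑ k, A i k * B k j from by simp [Matrix.mul_apply]]
    rw [Finset.sum_comm]
    simp_rw [← Finset.mul_sum, hBr, mul_one]
    exact hAr i
  · rw [show ∑ i, (A * B) i j = ∑ i, ∑ k, A i k * B k j from by simp [Matrix.mul_apply]]
    rw [Finset.sum_comm]
    simp_rw [← Finset.sum_mul, hAc, one_mul]
    exact hBc j

lemma DS.one : DS (1 : Matrix Q Q ℝ) := by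
  refine ⟨fun i j => ?_, fun i => ?_, fun j => ?_⟩ <;>
    simp [Matrix.one_apply, Finset.sum_ite_eq, Finset.sum_ite_eq']
  positivity

lemma DS.kron {A : Matrix Q Q ℝ} {B : Matrix R R ℝ} (hA : DS A) (hB : DS B) :
    DS (A ⊗ₖ B) := by
  obtain ⟨hA0, hAr, hAc⟩ := hA
  obtain ⟨hB0, hBr, hBc⟩ := hB
  refine ⟨fun i j => mul_nonneg (hA0 _ _) (hB0 _ _), fun i => ?_, fun j => ?_⟩
  · rw [Fintype.sum_prod_type]
    simp_rw [kroneckerMap_apply, ← Finset.mul_sum, hBr, mul_one]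
    exact hAr i.1
  · rw [Fintype.sum_prod_type]
    simp_rw [kroneckerMap_apply, ← Finset.mul_sum, hBc, mul_one]
    exact hAc j.1

lemma DS.blocks {A : Matrix Q Q ℝ} {B : Matrix R R ℝ} (hA : DS A) (hB : DS B) :
    DS (Matrix.fromBlocks A 0 0 B) := by
  obtain ⟨hA0, hAr, hAc⟩ := hA
  obtain ⟨hB0, hBr, hBc⟩ := hB
  refine ⟨fun i j => ?_, fun i => ?_, fun j => ?_⟩
  · rcases i with i | i <;> rcases j with j | j <;>
      simp [Matrix.fromBlocks, hA0, hB0]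
  · rcases i with i | i
    · simp [Fintype.sum_sum_type, Matrix.fromBlocks, hAr i]
    · simp [Fintype.sum_sum_type, Matrix.fromBlocks, hBr i]
  · rcases j with j | j
    · simp [Fintype.sum_sum_type, Matrix.fromBlocks, hAc j]
    · simp [Fintype.sum_sum_type, Matrix.fromBlocks, hBc j]

/-- The smoothing matrix: with prob 4/5 stay, with prob 1/5 go to uniform. -/
noncomputable def mix (Q : Type) [Fintype Q] [DecidableEq Q] : Matrix Q Q ℝ :=
  Matrix.of fun i j => (if i = j then (4/5 : ℝ) else 0) + 1 / (5 * Fintype.card Q)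

lemma ds_mix [Nonempty Q] : DS (mix Q) := by
  have hcard : 0 < (Fintype.card Q : ℝ) := by
    exact_mod_cast Fintype.card_pos
  have key : ∀ i : Q, ∑ j, ((if i = j then (4/5 : ℝ) else 0) + 1 / (5 * Fintype.card Q)) = 1 := by
    intro i
    rw [Finset.sum_add_distrib, Finset.sum_ite_eq Finset.univ i (fun _ => (4/5:ℝ))]
    simp only [Finset.mem_univ, if_true, Finset.sum_const, Finset.card_univ, nsmul_eq_mul]
    field_simp
    ring
  refine ⟨fun i j => ?_, fun i => ?_, fun j => ?_⟩
  · dsimp [PRACaux.mix]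
    have : (0:ℝ) ≤ 1 / (5 * Fintype.card Q) := by positivity
    split <;> linarith
  · exact key i
  · have : ∀ i : Q, (mix Q) i j = (if j = i then (4/5 : ℝ) else 0) + 1 / (5 * Fintype.card Q) := by
      intro i; dsimp [PRACaux.mix]; congr 1; simp [eq_comm]
    simp_rw [this]
    exact key j

lemma mix_mulVec [Nonempty Q] (v : Q → ℝ) (q : Q) :
    (mix Q).mulVec v q = 4/5 * v q + (∑ i, v i) / (5 * Fintype.card Q) := by
  simp only [Matrix.mulVec, dotProduct, PRACaux.mix, Matrix.of_apply]
  rw [show ∀ f : Q → ℝ, ∑ j, ((if q = j then (4/5:ℝ) else 0) + 1/(5*Fintype.card Q)) * f j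
      = ∑ j, ((if q = j then (4/5:ℝ) * f j else 0) + 1/(5*Fintype.card Q) * f j) from
    fun f => Finset.sum_congr rfl fun j _ => by split <;> ring]
  rw [Finset.sum_add_distrib, Finset.sum_ite_eq Finset.univ q]
  simp only [Finset.mem_univ, if_true, ← Finset.mul_sum]
  ring

lemma sum_mulVec {A : Matrix Q Q ℝ} (hA : DS A) (v : Q → ℝ) :
    ∑ i, A.mulVec v i = ∑ j, v j := by
  simp only [Matrix.mulVec, dotProduct]
  rw [Finset.sum_comm]
  exact Finset.sum_congr rfl fun j _ => by rw [← Finset.sum_mul, hA.2.2 j, one_mul]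

lemma nonneg_mulVec {A : Matrix Q Q ℝ} (hA : DS A) {v : Q → ℝ} (hv : ∀ i, 0 ≤ v i) (i : Q) :
    0 ≤ A.mulVec v i :=
  Finset.sum_nonneg fun j _ => mul_nonneg (hA.1 i j) (hv j)

lemma kron_mulVec (A : Matrix Q Q ℝ) (B : Matrix R R ℝ) (x : Q → ℝ) (y : R → ℝ) :
    (A ⊗ₖ B).mulVec (fun p => x p.1 * y p.2) = fun p => A.mulVec x p.1 * B.mulVec y p.2 := by
  funext p
  simp only [Matrix.mulVec, dotProduct, kroneckerMap_apply]
  rw [Finset.sum_mul_sum, Fintype.sum_prod_type]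
  exact Finset.sum_congr rfl fun j1 _ => Finset.sum_congr rfl fun j2 _ => by ring

lemma DS.submatrix {A : Matrix Q Q ℝ} (hA : DS A) (e : Q ≃ R) :
    DS (A.submatrix ⇑e.symm ⇑e.symm) := by
  obtain ⟨h0, hr, hc⟩ := hA
  refine ⟨fun i j => h0 _ _, fun i => ?_, fun j => ?_⟩
  · rw [show ∑ j : R, A.submatrix ⇑e.symm ⇑e.symm i j = ∑ j : R, A (e.symm i) (e.symm j) from rfl,
      Equiv.sum_comp e.symm (fun j => A (e.symm i) j)]
    exact hr _
  · rw [show ∑ i : R, A.submatrix ⇑e.symm ⇑e.symm i j = ∑ i : R, A (e.symm i) (e.symm j) from rfl,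
      Equiv.sum_comp e.symm (fun i => A i (e.symm j))]
    exact hc _

lemma sub_mulVec (A : Matrix Q Q ℝ) (e : Q ≃ R) (x : Q → ℝ) :
    (A.submatrix ⇑e.symm ⇑e.symm).mulVec (x ∘ ⇑e.symm) = (A.mulVec x) ∘ ⇑e.symm := by
  rw [Matrix.submatrix_mulVec_equiv]
  have : (x ∘ ⇑e.symm) ∘ ⇑e.symm.symm = x := by funext q; simp
  rw [this]

lemma single_comp (e : Q ≃ R) (q0 : Q) :
    (Pi.single (e q0) 1 : R → ℝ) = (Pi.single q0 1 : Q → ℝ) ∘ ⇑e.symm := by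
  funext i
  simp only [Function.comp_apply, Pi.single_apply]
  by_cases h : i = e q0
  · simp [h]
  · rw [if_neg h, if_neg]
    intro hc
    exact h (by rw [← hc]; simp)

end PRACaux


namespace PRACaux

variable {α : Type} {Q : Type} [Fintype Q] [DecidableEq Q]

/-- Transport PRAC data over an arbitrary fintype to an actual PRAC. -/
noncomputable def ofData (q0 : Q) (F : Finset Q) (V : α → Matrix Q Q ℝ) (Vh Vd : Matrix Q Q ℝ)
    (hV : ∀ a, DS (V a)) (hVh : DS Vh) (hVd : DS Vd) : PRAC α :=
  { n := Fintype.card Q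
    q0 := Fintype.equivFin Q q0
    F := F.map (Fintype.equivFin Q).toEmbedding
    V := fun a => (V a).submatrix ⇑(Fintype.equivFin Q).symm ⇑(Fintype.equivFin Q).symm
    Vhash := Vh.submatrix ⇑(Fintype.equivFin Q).symm ⇑(Fintype.equivFin Q).symm
    Vdollar := Vd.submatrix ⇑(Fintype.equivFin Q).symm ⇑(Fintype.equivFin Q).symm
    ds := fun a => (hV a).submatrix _
    ds_hash := hVh.submatrix _
    ds_dollar := hVd.submatrix _ }

lemma accProb_ofData (q0 : Q) (F : Finset Q) (V : α → Matrix Q Q ℝ) (Vh Vd : Matrix Q Q ℝ)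
    (hV : ∀ a, DS (V a)) (hVh : DS Vh) (hVd : DS Vd) (w : List α) :
    (ofData q0 F V Vh Vd hV hVh hVd).accProb w =
      ∑ q ∈ F, (Vd.mulVec (w.foldl (fun v a => (V a).mulVec v)
        (Vh.mulVec (Pi.single q0 1)))) q := by
  set e := Fintype.equivFin Q with he
  have hfold : ∀ (w : List α) (x : Q → ℝ),
      w.foldl (fun v a => ((V a).submatrix ⇑e.symm ⇑e.symm).mulVec v) (x ∘ ⇑e.symm)
        = (w.foldl (fun v a => (V a).mulVec v) x) ∘ ⇑e.symm := by
    intro w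
    induction w with
    | nil => intro x; rfl
    | cons a t ih =>
        intro x
        simp only [List.foldl_cons]
        rw [sub_mulVec (V a) e x, ih]
  show ∑ q ∈ F.map e.toEmbedding, _ = _
  refine (Finset.sum_map F e.toEmbedding _).trans ?_
  refine Finset.sum_congr rfl fun q hq => ?_
  have h0 : (Pi.single (e q0) 1 : Fin (Fintype.card Q) → ℝ) = (Pi.single q0 1) ∘ ⇑e.symm :=
    single_comp e q0
  show (Vd.submatrix ⇑e.symm ⇑e.symm).mulVec
      (w.foldl (fun v a => ((V a).submatrix ⇑e.symm ⇑e.symm).mulVec v)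
        ((Vh.submatrix ⇑e.symm ⇑e.symm).mulVec (Pi.single (e q0) 1))) (e q) = _
  rw [h0, sub_mulVec Vh e, hfold, sub_mulVec Vd e]
  simp

/-- The final distribution of a PRAC on a word (after the $-marker). -/
noncomputable def fin (A : PRAC α) (w : List α) : Fin A.n → ℝ :=
  A.Vdollar.mulVec (w.foldl (fun v a => (A.V a).mulVec v) (A.Vhash.mulVec (Pi.single A.q0 1)))

lemma accProb_eq_sum_fin (A : PRAC α) (w : List α) : A.accProb w = ∑ q ∈ A.F, fin A w q := rfl

lemma fin_nonneg (A : PRAC α) (w : List α) (q : Fin A.n) : 0 ≤ fin A w q := by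
  have base : ∀ i, (0:ℝ) ≤ A.Vhash.mulVec (Pi.single A.q0 1) i :=
    nonneg_mulVec A.ds_hash (fun i => by
      by_cases h : i = A.q0 <;> simp [Pi.single_apply, h])
  have hfold : ∀ (w : List α) (x : Fin A.n → ℝ), (∀ i, 0 ≤ x i) →
      ∀ i, 0 ≤ w.foldl (fun v a => (A.V a).mulVec v) x i := by
    intro w
    induction w with
    | nil => intro x hx; exact hx
    | cons a t ih => intro x hx; exact ih _ (nonneg_mulVec (A.ds a) hx)
  exact nonneg_mulVec A.ds_dollar (hfold w _ base) q

lemma sum_fin (A : PRAC α) (w : List α) : ∑ q, fin A w q = 1 := by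
  have base : ∑ i, A.Vhash.mulVec (Pi.single A.q0 1) i = 1 := by
    rw [sum_mulVec A.ds_hash]
    simp
  have hfold : ∀ (w : List α) (x : Fin A.n → ℝ), (∑ i, x i) = 1 →
      ∑ i, w.foldl (fun v a => (A.V a).mulVec v) x i = 1 := by
    intro w
    induction w with
    | nil => intro x hx; exact hx
    | cons a t ih => intro x hx; exact ih _ (by rw [sum_mulVec (A.ds a)]; exact hx)
  rw [fin]
  rw [sum_mulVec A.ds_dollar]
  exact hfold w _ base

lemma accProb_nonneg (A : PRAC α) (w : List α) : 0 ≤ A.accProb w := by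
  rw [accProb_eq_sum_fin]
  exact Finset.sum_nonneg fun q _ => fin_nonneg A w q

lemma accProb_le_one (A : PRAC α) (w : List α) : A.accProb w ≤ 1 := by
  rw [accProb_eq_sum_fin, ← sum_fin A w]
  exact Finset.sum_le_sum_of_subset_of_nonneg (Finset.subset_univ _)
    (fun q _ _ => fin_nonneg A w q)

end PRACaux


namespace PRACaux

variable {α : Type}

/-- State space of the combined automaton: product states plus dummy states. -/
abbrev CQ (A1 A2 : PRAC α) : Type := (Fin A1.n × Fin A2.n) ⊕ Fin (5 * (A1.n * A2.n))

instance (A1 A2 : PRAC α) : Nonempty (CQ A1 A2) := ⟨Sum.inl (A1.q0, A2.q0)⟩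

/-- The combined automaton with a given accepting set. -/
noncomputable def combined (A1 A2 : PRAC α) (F : Finset (CQ A1 A2)) : PRAC α :=
  ofData (Sum.inl (A1.q0, A2.q0)) F
    (fun a => Matrix.fromBlocks (A1.V a ⊗ₖ A2.V a) 0 0 1)
    (Matrix.fromBlocks (A1.Vhash ⊗ₖ A2.Vhash) 0 0 1)
    (mix (CQ A1 A2) * Matrix.fromBlocks (A1.Vdollar ⊗ₖ A2.Vdollar) 0 0 1)
    (fun a => DS.blocks (DS.kron (A1.ds a) (A2.ds a)) DS.one)
    (DS.blocks (DS.kron A1.ds_hash A2.ds_hash) DS.one)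
    (DS.mul ds_mix (DS.blocks (DS.kron A1.ds_dollar A2.ds_dollar) DS.one))

lemma blocks_one_mulVec {Q S : Type} [Fintype Q] [Fintype S] [DecidableEq S]
    (A : Matrix Q Q ℝ) (x : Q → ℝ) (y : S → ℝ) :
    (Matrix.fromBlocks A 0 0 (1 : Matrix S S ℝ)).mulVec (Sum.elim x y)
      = Sum.elim (A.mulVec x) y := by
  rw [Matrix.fromBlocks_mulVec]
  simp

lemma accProb_combined (A1 A2 : PRAC α) (F : Finset (CQ A1 A2)) (w : List α) :
    (combined A1 A2 F).accProb w =
      4/5 * (∑ q ∈ F, Sum.elim (fun p => fin A1 w p.1 * fin A2 w p.2) (fun _ => (0:ℝ)) q)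
        + F.card / (5 * (6 * ((A1.n : ℝ) * A2.n))) := by
  rw [combined, accProb_ofData]
  -- initial vector as a tensor
  have hsingle : (Pi.single (Sum.inl (A1.q0, A2.q0)) 1 : CQ A1 A2 → ℝ)
      = Sum.elim (fun p => (Pi.single A1.q0 1 : Fin A1.n → ℝ) p.1 * (Pi.single A2.q0 1 : Fin A2.n → ℝ) p.2) (fun _ => (0:ℝ)) := by
    funext q
    rcases q with p | d
    · rcases p with ⟨p1, p2⟩
      simp only [Sum.elim_inl, Pi.single_apply]
      by_cases h1 : p1 = A1.q0 <;> by_cases h2 : p2 = A2.q0 <;>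
        simp [h1, h2, Sum.inl.injEq, Prod.mk.injEq]
    · simp [Pi.single_apply]
  have hstep : ∀ (M1 : Matrix (Fin A1.n) (Fin A1.n) ℝ) (M2 : Matrix (Fin A2.n) (Fin A2.n) ℝ)
      (x : Fin A1.n → ℝ) (y : Fin A2.n → ℝ),
      (Matrix.fromBlocks (M1 ⊗ₖ M2) 0 0 (1 : Matrix (Fin (5 * (A1.n * A2.n))) (Fin (5 * (A1.n * A2.n))) ℝ)).mulVec
          (Sum.elim (fun p => x p.1 * y p.2) (fun _ => (0:ℝ)))
        = Sum.elim (fun p => M1.mulVec x p.1 * M2.mulVec y p.2) (fun _ => (0:ℝ)) := by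
    intro M1 M2 x y
    rw [blocks_one_mulVec, kron_mulVec]
  have hfold : ∀ (w : List α) (x : Fin A1.n → ℝ) (y : Fin A2.n → ℝ),
      w.foldl (fun v a =>
          (Matrix.fromBlocks (A1.V a ⊗ₖ A2.V a) 0 0 (1 : Matrix (Fin (5 * (A1.n * A2.n))) (Fin (5 * (A1.n * A2.n))) ℝ)).mulVec v)
        (Sum.elim (fun p => x p.1 * y p.2) (fun _ => (0:ℝ)))
      = Sum.elim (fun p =>
          (w.foldl (fun v a => (A1.V a).mulVec v) x) p.1 *
          (w.foldl (fun v a => (A2.V a).mulVec v) y) p.2) (fun _ => (0:ℝ)) := by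
    intro w
    induction w with
    | nil => intro x y; rfl
    | cons a t ih =>
        intro x y
        simp only [List.foldl_cons]
        rw [hstep, ih]
  rw [hsingle, hstep, hfold, ← Matrix.mulVec_mulVec, hstep]
  set u1 := fin A1 w with hu1
  set u2 := fin A2 w with hu2
  have hu1' : A1.Vdollar.mulVec (w.foldl (fun v a => (A1.V a).mulVec v)
      (A1.Vhash.mulVec (Pi.single A1.q0 1))) = u1 := rfl
  have hu2' : A2.Vdollar.mulVec (w.foldl (fun v a => (A2.V a).mulVec v)
      (A2.Vhash.mulVec (Pi.single A2.q0 1))) = u2 := rfl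
  rw [hu1', hu2']
  set t : CQ A1 A2 → ℝ := Sum.elim (fun p => u1 p.1 * u2 p.2) (fun _ => (0:ℝ)) with ht
  have hsum : ∑ i, t i = 1 := by
    rw [ht]
    rw [Fintype.sum_sum_type]
    simp only [Sum.elim_inl, Sum.elim_inr]
    rw [Fintype.sum_prod_type]
    simp_rw [← Finset.mul_sum]
    rw [← Finset.sum_mul, sum_fin, sum_fin]
    simp
  have hcard : (Fintype.card (CQ A1 A2) : ℝ) = 6 * ((A1.n : ℝ) * A2.n) := by
    simp [Fintype.card_sum, Fintype.card_prod]
    push_cast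
    ring
  have : ∀ q ∈ F, (mix (CQ A1 A2)).mulVec t q = 4/5 * t q + 1 / (5 * (6 * ((A1.n:ℝ) * A2.n))) := by
    intro q _
    rw [mix_mulVec, hsum, hcard]
  rw [Finset.sum_congr rfl this, Finset.sum_add_distrib, Finset.sum_const, Finset.mul_sum,
    nsmul_eq_mul]
  ring

noncomputable def interF (A1 A2 : PRAC α) : Finset (CQ A1 A2) :=
  ((A1.F ×ˢ A2.F).map ⟨Sum.inl, Sum.inl_injective⟩) ∪
    (Finset.univ.map ⟨Sum.inr, Sum.inr_injective⟩)

noncomputable def unionF (A1 A2 : PRAC α) : Finset (CQ A1 A2) :=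
  ((Finset.univ : Finset (Fin A1.n × Fin A2.n)) \ (A1.Fᶜ ×ˢ A2.Fᶜ)).map
    ⟨Sum.inl, Sum.inl_injective⟩

lemma n_pos (A : PRAC α) : 0 < A.n := A.q0.pos

lemma acc_inter (A1 A2 : PRAC α) (w : List α) :
    ∃ c : ℝ, (combined A1 A2 (interF A1 A2)).accProb w
        = 4/5 * (A1.accProb w * A2.accProb w) + c ∧ 1/6 ≤ c ∧ c ≤ 1/5 := by
  rw [accProb_combined]
  have hdisj : Disjoint ((A1.F ×ˢ A2.F).map ⟨Sum.inl, Sum.inl_injective⟩)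
      ((Finset.univ : Finset (Fin (5 * (A1.n * A2.n)))).map ⟨Sum.inr, Sum.inr_injective⟩) := by
    rw [Finset.disjoint_left]
    rintro q hq hq'
    rw [Finset.mem_map] at hq hq'
    obtain ⟨p, _, rfl⟩ := hq
    obtain ⟨d, _, h⟩ := hq'
    exact Sum.inr_ne_inl h
  have hsum : ∑ q ∈ interF A1 A2,
      Sum.elim (fun p => fin A1 w p.1 * fin A2 w p.2) (fun _ => (0:ℝ)) q
      = A1.accProb w * A2.accProb w := by
    rw [interF, Finset.sum_union hdisj, Finset.sum_map, Finset.sum_map]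
    simp only [Function.Embedding.coeFn_mk, Sum.elim_inl, Sum.elim_inr,
      Finset.sum_const_zero, add_zero]
    rw [Finset.sum_product]
    simp_rw [← Finset.mul_sum]
    rw [← Finset.sum_mul]
    rfl
  have hcard : (interF A1 A2).card = A1.F.card * A2.F.card + 5 * (A1.n * A2.n) := by
    rw [interF, Finset.card_union_of_disjoint hdisj, Finset.card_map, Finset.card_map,
      Finset.card_product, Finset.card_univ, Fintype.card_fin]
  refine ⟨_, by rw [hsum], ?_, ?_⟩
  · rw [hcard]
    have hm : (0:ℝ) < (A1.n : ℝ) * A2.n := by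
      have := n_pos A1; have := n_pos A2; positivity
    rw [le_div_iff₀ (by positivity)]
    push_cast
    nlinarith [show (0:ℝ) ≤ ((A1.F.card * A2.F.card : ℕ) : ℝ) from Nat.cast_nonneg _, hm]
  · rw [hcard]
    have hm : (0:ℝ) < (A1.n : ℝ) * A2.n := by
      have := n_pos A1; have := n_pos A2; positivity
    rw [div_le_iff₀ (by positivity)]
    have hc1 : (A1.F.card : ℝ) ≤ A1.n := by
      exact_mod_cast (Finset.card_le_card (Finset.subset_univ A1.F)).trans_eq
        (by rw [Finset.card_univ, Fintype.card_fin])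
    have hc2 : (A2.F.card : ℝ) ≤ A2.n := by
      exact_mod_cast (Finset.card_le_card (Finset.subset_univ A2.F)).trans_eq
        (by rw [Finset.card_univ, Fintype.card_fin])
    have h1 : (0:ℝ) ≤ (A1.F.card : ℝ) := Nat.cast_nonneg _
    have h2 : (0:ℝ) ≤ (A2.F.card : ℝ) := Nat.cast_nonneg _
    have hn1 : (0:ℝ) ≤ (A1.n : ℝ) := Nat.cast_nonneg _
    push_cast
    nlinarith

lemma acc_union (A1 A2 : PRAC α) (w : List α) :
    ∃ c : ℝ, (combined A1 A2 (unionF A1 A2)).accProb w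
        = 4/5 * (1 - (1 - A1.accProb w) * (1 - A2.accProb w)) + c ∧ 0 ≤ c ∧ c ≤ 1/30 := by
  rw [accProb_combined]
  have hsub : (A1.Fᶜ ×ˢ A2.Fᶜ) ⊆ (Finset.univ : Finset (Fin A1.n × Fin A2.n)) :=
    Finset.subset_univ _
  have hcompl1 : ∑ q ∈ A1.Fᶜ, fin A1 w q = 1 - A1.accProb w := by
    have := Finset.sum_add_sum_compl A1.F (fin A1 w)
    rw [sum_fin] at this
    rw [accProb_eq_sum_fin]
    linarith
  have hcompl2 : ∑ q ∈ A2.Fᶜ, fin A2 w q = 1 - A2.accProb w := by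
    have := Finset.sum_add_sum_compl A2.F (fin A2 w)
    rw [sum_fin] at this
    rw [accProb_eq_sum_fin]
    linarith
  have huniv : ∑ p : Fin A1.n × Fin A2.n, fin A1 w p.1 * fin A2 w p.2 = 1 := by
    rw [Fintype.sum_prod_type]
    simp_rw [← Finset.mul_sum]
    rw [← Finset.sum_mul, sum_fin, sum_fin]
    simp
  have hsum : ∑ q ∈ unionF A1 A2,
      Sum.elim (fun p => fin A1 w p.1 * fin A2 w p.2) (fun _ => (0:ℝ)) q
      = 1 - (1 - A1.accProb w) * (1 - A2.accProb w) := by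
    rw [unionF, Finset.sum_map]
    simp only [Function.Embedding.coeFn_mk, Sum.elim_inl]
    rw [Finset.sum_sdiff_eq_sub hsub, huniv, Finset.sum_product]
    simp_rw [← Finset.mul_sum]
    rw [← Finset.sum_mul, hcompl1, hcompl2]
  have hm : (0:ℝ) < (A1.n : ℝ) * A2.n := by
    have h1 := n_pos A1; have h2 := n_pos A2
    have : (0:ℝ) < (A1.n:ℝ) := by exact_mod_cast h1
    have : (0:ℝ) < (A2.n:ℝ) := by exact_mod_cast h2
    positivity
  have hcard : ((unionF A1 A2).card : ℝ) ≤ (A1.n : ℝ) * A2.n := by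
    rw [unionF, Finset.card_map]
    have := Finset.card_le_card (Finset.subset_univ
      ((Finset.univ : Finset (Fin A1.n × Fin A2.n)) \ (A1.Fᶜ ×ˢ A2.Fᶜ)))
    rw [Finset.card_univ, Fintype.card_prod, Fintype.card_fin, Fintype.card_fin] at this
    exact_mod_cast this
  refine ⟨_, by rw [hsum], by positivity, ?_⟩
  rw [div_le_iff₀ (by positivity)]
  nlinarith

end PRACaux


/-- If `L₁` is recognized with probability `> 2/3` and `L₂` is recognized with probability
`> 2/3`, then `L₁ ∩ L₂` and `L₁ ∪ L₂` are recognized with probability `> 1/2`. -/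
theorem prac_union_inter {α : Type} (L1 L2 : Set (List α)) (A1 A2 : PRAC α) (p1 p2 : ℝ)
    (hp1 : 2 / 3 < p1) (hp2 : 2 / 3 < p2)
    (h1 : A1.RecognizesWithProb L1 p1) (h2 : A2.RecognizesWithProb L2 p2) :
    (∃ (B : PRAC α) (p : ℝ), 1 / 2 < p ∧ B.RecognizesWithProb (L1 ∩ L2) p) ∧
    (∃ (B : PRAC α) (p : ℝ), 1 / 2 < p ∧ B.RecognizesWithProb (L1 ∪ L2) p) := by
  open PRACaux in
  obtain ⟨h1a, h1b, h1c, h1acc, h1rej⟩ := h1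
  obtain ⟨h2a, h2b, h2c, h2acc, h2rej⟩ := h2
  set p : ℝ := min (4/5 * min p1 p2) (4/5 * (p1 * p2) + 1/6) with hp
  have hmin : 2/3 < min p1 p2 := lt_min hp1 hp2
  have hphalf : 1/2 < p := by
    apply lt_min
    · nlinarith [lt_min hp1 hp2]
    · nlinarith
  have hple1 : p ≤ 1 := by
    have : 4/5 * min p1 p2 ≤ 1 := by
      have := min_le_left p1 p2
      nlinarith [h1c]
    exact (min_le_left _ _).trans this
  have hbasic : 0 ≤ 1 - p ∧ 1 - p < p ∧ p ≤ 1 :=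
    ⟨by linarith, by linarith, hple1⟩
  constructor
  · refine ⟨combined A1 A2 (interF A1 A2), p, hphalf, ?_, ?_, ?_, ?_, ?_⟩
    · exact hbasic.1
    · exact hbasic.2.1
    · exact hbasic.2.2
    · intro w hw
      obtain ⟨c, hc, hc1, hc2⟩ := acc_inter A1 A2 w
      rw [hc]
      have ha1 := h1acc w hw.1
      have ha2 := h2acc w hw.2
      have := min_le_right (4/5 * min p1 p2) (4/5 * (p1 * p2) + 1/6)
      nlinarith
    · intro w hw
      obtain ⟨c, hc, hc1, hc2⟩ := acc_inter A1 A2 w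
      rw [hc]
      have hple : p ≤ 4/5 * min p1 p2 := min_le_left _ _
      have hb1 : 0 ≤ A1.accProb w := accProb_nonneg A1 w
      have hb2 : 0 ≤ A2.accProb w := accProb_nonneg A2 w
      have hb1' : A1.accProb w ≤ 1 := accProb_le_one A1 w
      have hb2' : A2.accProb w ≤ 1 := accProb_le_one A2 w
      rw [Set.mem_inter_iff, not_and_or] at hw
      rcases hw with hw | hw
      · have := h1rej w hw
        have h12 : min p1 p2 ≤ p1 := min_le_left _ _
        nlinarith
      · have := h2rej w hw
        have h12 : min p1 p2 ≤ p2 := min_le_right _ _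
        nlinarith
  · refine ⟨combined A1 A2 (unionF A1 A2), p, hphalf, ?_, ?_, ?_, ?_, ?_⟩
    · exact hbasic.1
    · exact hbasic.2.1
    · exact hbasic.2.2
    · intro w hw
      obtain ⟨c, hc, hc1, hc2⟩ := acc_union A1 A2 w
      rw [hc]
      have hple : p ≤ 4/5 * min p1 p2 := min_le_left _ _
      have hb1 : 0 ≤ A1.accProb w := accProb_nonneg A1 w
      have hb2 : 0 ≤ A2.accProb w := accProb_nonneg A2 w
      have hb1' : A1.accProb w ≤ 1 := accProb_le_one A1 w
      have hb2' : A2.accProb w ≤ 1 := accProb_le_one A2 w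
      rcases hw with hw | hw
      · have := h1acc w hw
        have h12 : min p1 p2 ≤ p1 := min_le_left _ _
        nlinarith
      · have := h2acc w hw
        have h12 : min p1 p2 ≤ p2 := min_le_right _ _
        nlinarith
    · intro w hw
      rw [Set.mem_union, not_or] at hw
      obtain ⟨c, hc, hc1, hc2⟩ := acc_union A1 A2 w
      rw [hc]
      have hr1 := h1rej w hw.1
      have hr2 := h2rej w hw.2
      have hb1 : 0 ≤ A1.accProb w := accProb_nonneg A1 w
      have hb2 : 0 ≤ A2.accProb w := accProb_nonneg A2 w
      have := min_le_right (4/5 * min p1 p2) (4/5 * (p1 * p2) + 1/6)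
      nlinarith
end

section
/- If a PRA-C recognizes a language L ⊆ Σ* with probability 1 (i.e., every word in L is accepted with probability 1 and every word not in L is accepted with probability 0), then there exists a deterministic finite automaton accepting exactly L such that for every letter σ ∈ Σ the transition map q ↦ step(q,σ) is a bijection of the state set (i.e., L is recognized by a permutation automaton). -/
namespace PRACAux
open Finset
variable {n : ℕ}
noncomputable def suppV (v : Fin n → ℝ) : Finset (Fin n) :=
  Finset.univ.filter (fun i => 0 < v i)
open Classical in
noncomputable def fm (V : Matrix (Fin n) (Fin n) ℝ) (S : Finset (Fin n)) : Finset (Fin n) :=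
  Finset.univ.filter (fun i => ∃ j ∈ S, 0 < V i j)
lemma mem_suppV {v : Fin n → ℝ} {i} : i ∈ suppV v ↔ 0 < v i := by simp [suppV]
lemma mem_fm {V : Matrix (Fin n) (Fin n) ℝ} {S i} : i ∈ fm V S ↔ ∃ j ∈ S, 0 < V i j := by
  simp [fm]

variable {V : Matrix (Fin n) (Fin n) ℝ} {v : Fin n → ℝ} {S T : Finset (Fin n)}

lemma fm_union : fm V (S ∪ T) = fm V S ∪ fm V T := by
  ext i; simp only [mem_fm, mem_union]; constructor
  · rintro ⟨j, hj | hj, h⟩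
    · exact Or.inl ⟨j, hj, h⟩
    · exact Or.inr ⟨j, hj, h⟩
  · rintro (⟨j, hj, h⟩ | ⟨j, hj, h⟩) <;> exact ⟨j, by simp [hj], h⟩

lemma fm_mono (hST : S ⊆ T) : fm V S ⊆ fm V T := by
  intro i hi; rw [mem_fm] at hi ⊢; obtain ⟨j, hj, h⟩ := hi; exact ⟨j, hST hj, h⟩

lemma mulVec_nonneg (hV : DoublyStochastic V) (hv : ∀ i, 0 ≤ v i) (i : Fin n) :
    0 ≤ V.mulVec v i := by
  simp only [Matrix.mulVec, dotProduct]
  exact Finset.sum_nonneg fun j _ => mul_nonneg (hV.1 i j) (hv j)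

lemma sum_mulVec (hV : DoublyStochastic V) : ∑ i, V.mulVec v i = ∑ j, v j := by
  simp only [Matrix.mulVec, dotProduct]
  rw [Finset.sum_comm]
  refine Finset.sum_congr rfl fun j _ => ?_
  rw [← Finset.sum_mul, hV.2.2 j, one_mul]

lemma suppV_mulVec (hV : DoublyStochastic V) (hv : ∀ i, 0 ≤ v i) :
    suppV (V.mulVec v) = fm V (suppV v) := by
  ext i
  simp only [mem_suppV, mem_fm, Matrix.mulVec, dotProduct]
  constructor
  · intro h
    by_contra hc
    push_neg at hc
    have hzero : ∑ x : Fin n, V i x * v x = 0 := by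
      refine Finset.sum_eq_zero fun j _ => ?_
      rcases eq_or_lt_of_le (hv j) with h0 | h0
      · rw [← h0, mul_zero]
      · have hz : V i j = 0 := le_antisymm (hc j h0) (hV.1 i j)
        rw [hz, zero_mul]
    linarith
  · rintro ⟨j, hj, h⟩
    refine Finset.sum_pos' (fun k _ => mul_nonneg (hV.1 i k) (hv k)) ⟨j, Finset.mem_univ j, ?_⟩
    exact mul_pos h hj

lemma card_le_fm (hV : DoublyStochastic V) : S.card ≤ (fm V S).card := by
  have key : (S.card : ℝ) ≤ ((fm V S).card : ℝ) := by
    calc (S.card : ℝ) = ∑ j ∈ S, (1 : ℝ) := by simp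
    _ = ∑ j ∈ S, ∑ i, V i j := by
        refine Finset.sum_congr rfl fun j _ => (hV.2.2 j).symm
    _ = ∑ j ∈ S, ∑ i ∈ fm V S, V i j := by
        refine Finset.sum_congr rfl fun j hj => ?_
        refine (Finset.sum_subset (Finset.subset_univ _) fun i _ hi => ?_).symm
        by_contra hne
        have hpos : 0 < V i j := lt_of_le_of_ne (hV.1 i j) (Ne.symm hne)
        exact hi (mem_fm.mpr ⟨j, hj, hpos⟩)
    _ = ∑ i ∈ fm V S, ∑ j ∈ S, V i j := Finset.sum_comm
    _ ≤ ∑ i ∈ fm V S, (1 : ℝ) := by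
        refine Finset.sum_le_sum fun i _ => ?_
        calc ∑ j ∈ S, V i j ≤ ∑ j, V i j :=
              Finset.sum_le_sum_of_subset_of_nonneg (Finset.subset_univ _)
                (fun j _ _ => hV.1 i j)
        _ = 1 := hV.2.1 i
    _ = ((fm V S).card : ℝ) := by simp
  exact_mod_cast key

lemma exists_idem {β : Type*} [Finite β] (f : β → β) :
    ∃ k, 1 ≤ k ∧ f^[k] ∘ f^[k] = f^[k] := by
  obtain ⟨i, j, hne, hij⟩ :=
    Finite.exists_ne_map_eq_of_infinite (fun m : ℕ => f^[m])
  wlog hlt : i < j generalizing i j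
  · exact this j i (Ne.symm hne) hij.symm (by omega)
  obtain ⟨d, rfl⟩ : ∃ d, j = i + (d + 1) := ⟨j - i - 1, by omega⟩
  set D := d + 1 with hD
  have step : ∀ m, i ≤ m → f^[m + D] = f^[m] := by
    intro m hm
    obtain ⟨e, rfl⟩ := Nat.exists_eq_add_of_le hm
    have h1 : (i + e) + D = e + (i + D) := by omega
    rw [h1, Function.iterate_add, ← hij, ← Function.iterate_add, Nat.add_comm e i]
  have steps : ∀ t m, i ≤ m → f^[m + t * D] = f^[m] := by
    intro t
    induction t with
    | zero => simp
    | succ t ih =>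
      intro m hm
      have h1 : m + (t + 1) * D = (m + t * D) + D := by ring
      rw [h1, step _ (by omega), ih m hm]
  have hk0 : i + 1 ≤ (i + 1) * D := Nat.le_mul_of_pos_right _ (by omega)
  refine ⟨(i + 1) * D, by omega, ?_⟩
  rw [← Function.iterate_add]
  exact steps (i + 1) ((i + 1) * D) (by omega)


section Auto
variable {α : Type} (A : PRAC α)

noncomputable def dist (w : List α) : Fin A.n → ℝ :=
  w.foldl (fun v a => (A.V a).mulVec v) (A.Vhash.mulVec (Pi.single A.q0 1))

noncomputable def S0 : Finset (Fin A.n) := fm A.Vhash {A.q0}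

noncomputable def phi (w : List α) (S : Finset (Fin A.n)) : Finset (Fin A.n) :=
  w.foldl (fun S a => fm (A.V a) S) S

@[simp] lemma phi_nil (S : Finset (Fin A.n)) : phi A [] S = S := rfl

lemma phi_cons (a : α) (w : List α) (S : Finset (Fin A.n)) :
    phi A (a :: w) S = phi A w (fm (A.V a) S) := rfl

lemma phi_append (x y : List α) (S : Finset (Fin A.n)) :
    phi A (x ++ y) S = phi A y (phi A x S) := by
  simp [phi, List.foldl_append]

lemma phi_mono (w : List α) {S T : Finset (Fin A.n)} (h : S ⊆ T) :
    phi A w S ⊆ phi A w T := by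
  induction w generalizing S T with
  | nil => simpa using h
  | cons a w ih => rw [phi_cons, phi_cons]; exact ih (fm_mono h)

lemma phi_union (w : List α) (S T : Finset (Fin A.n)) :
    phi A w (S ∪ T) = phi A w S ∪ phi A w T := by
  induction w generalizing S T with
  | nil => simp
  | cons a w ih => rw [phi_cons, fm_union, ih, phi_cons, phi_cons]

lemma phi_card (w : List α) (S : Finset (Fin A.n)) :
    S.card ≤ (phi A w S).card := by
  induction w generalizing S with
  | nil => simp
  | cons a w ih =>
    rw [phi_cons]
    exact le_trans (card_le_fm (A.ds a)) (ih _)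

lemma phi_replicate (k : ℕ) (a : α) (S : Finset (Fin A.n)) :
    phi A (List.replicate k a) S = (fm (A.V a))^[k] S := by
  induction k generalizing S with
  | zero => simp
  | succ k ih =>
    rw [List.replicate_succ, phi_cons, ih, Function.iterate_succ_apply]

lemma single_nonneg' (j : Fin A.n) : 0 ≤ (Pi.single A.q0 1 : Fin A.n → ℝ) j := by
  rw [Pi.single_apply]; split <;> norm_num

lemma dist_nonneg (w : List α) (i : Fin A.n) : 0 ≤ dist A w i := by
  have base : ∀ i, 0 ≤ (A.Vhash.mulVec (Pi.single A.q0 1)) i :=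
    fun i => mulVec_nonneg A.ds_hash (single_nonneg' A) i
  have : ∀ (w : List α) (v : Fin A.n → ℝ), (∀ i, 0 ≤ v i) →
      ∀ i, 0 ≤ (w.foldl (fun v a => (A.V a).mulVec v) v) i := by
    intro w
    induction w with
    | nil => intro v hv i; exact hv i
    | cons a w ih =>
      intro v hv i
      exact ih _ (fun j => mulVec_nonneg (A.ds a) hv j) i
  exact this w _ base i

lemma dist_sum (w : List α) : ∑ i, dist A w i = 1 := by
  have base : ∑ i, (A.Vhash.mulVec (Pi.single A.q0 1)) i = 1 := by
    rw [sum_mulVec A.ds_hash]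
    simp
  have : ∀ (w : List α) (v : Fin A.n → ℝ), (∑ i, v i = 1) →
      ∑ i, (w.foldl (fun v a => (A.V a).mulVec v) v) i = 1 := by
    intro w
    induction w with
    | nil => intro v hv; exact hv
    | cons a w ih =>
      intro v hv
      exact ih _ (by rw [sum_mulVec (A.ds a), hv])
  exact this w _ base

lemma suppV_dist (w : List α) : suppV (dist A w) = phi A w (S0 A) := by
  have base : suppV (A.Vhash.mulVec (Pi.single A.q0 1)) = S0 A := by
    rw [suppV_mulVec A.ds_hash (single_nonneg' A)]
    congr 1
    ext i
    rw [mem_suppV, Pi.single_apply, Finset.mem_singleton]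
    split <;> simp_all
  have : ∀ (w : List α) (v : Fin A.n → ℝ), (∀ i, 0 ≤ v i) →
      suppV ((w.foldl (fun v a => (A.V a).mulVec v) v)) = phi A w (suppV v) := by
    intro w
    induction w with
    | nil => intro v _; rfl
    | cons a w ih =>
      intro v hv
      have h1 := ih ((A.V a).mulVec v) (fun j => mulVec_nonneg (A.ds a) hv j)
      rw [List.foldl_cons, h1, suppV_mulVec (A.ds a) hv, phi_cons]
  rw [show dist A w = w.foldl (fun v a => (A.V a).mulVec v)
        (A.Vhash.mulVec (Pi.single A.q0 1)) from rfl,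
    this w _ (fun i => mulVec_nonneg A.ds_hash (single_nonneg' A) i), base]

noncomputable def FS (w : List α) : Finset (Fin A.n) := fm A.Vdollar (phi A w (S0 A))

lemma FS_eq (w : List α) : FS A w = suppV (A.Vdollar.mulVec (dist A w)) := by
  rw [suppV_mulVec A.ds_dollar (dist_nonneg A w), suppV_dist]
  rfl

lemma final_nonneg (w : List α) (i : Fin A.n) : 0 ≤ A.Vdollar.mulVec (dist A w) i :=
  mulVec_nonneg A.ds_dollar (dist_nonneg A w) i

lemma final_sum (w : List α) : ∑ i, A.Vdollar.mulVec (dist A w) i = 1 := by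
  rw [sum_mulVec A.ds_dollar, dist_sum]

lemma FS_nonempty (w : List α) : (FS A w).Nonempty := by
  rw [FS_eq]
  by_contra h
  rw [Finset.not_nonempty_iff_eq_empty] at h
  have : ∑ i, A.Vdollar.mulVec (dist A w) i = 0 := by
    refine Finset.sum_eq_zero fun i _ => ?_
    by_contra hne
    have : 0 < A.Vdollar.mulVec (dist A w) i :=
      lt_of_le_of_ne (final_nonneg A w i) (Ne.symm hne)
    have : i ∈ suppV (A.Vdollar.mulVec (dist A w)) := mem_suppV.mpr this
    rw [h] at this
    exact absurd this (Finset.notMem_empty i)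
  rw [final_sum] at this
  norm_num at this

lemma accProb_eq (w : List α) :
    A.accProb w = ∑ q ∈ A.F, A.Vdollar.mulVec (dist A w) q := rfl

end Auto

section Lang
variable {α : Type} {L : Set (List α)} {A : PRAC α}

lemma mem_L (hacc : ∀ w ∈ L, A.accProb w = 1) (hrej : ∀ w ∉ L, A.accProb w = 0)
    (w : List α) : w ∈ L ↔ ((FS A w) ∩ A.F).Nonempty := by
  constructor
  · intro hw
    have h1 : ∑ q ∈ A.F, A.Vdollar.mulVec (dist A w) q = 1 := by
      rw [← accProb_eq]; exact hacc w hw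
    have h2 : ∃ q ∈ A.F, 0 < A.Vdollar.mulVec (dist A w) q := by
      by_contra hc
      push_neg at hc
      have : ∑ q ∈ A.F, A.Vdollar.mulVec (dist A w) q = 0 :=
        Finset.sum_eq_zero fun q hq => le_antisymm (hc q hq) (final_nonneg A w q)
      rw [h1] at this; norm_num at this
    obtain ⟨q, hqF, hq⟩ := h2
    exact ⟨q, Finset.mem_inter.mpr ⟨by rw [FS_eq]; exact mem_suppV.mpr hq, hqF⟩⟩
  · rintro ⟨q, hq⟩
    rw [Finset.mem_inter, FS_eq, mem_suppV] at hq
    by_contra hw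
    have h0 : ∑ q ∈ A.F, A.Vdollar.mulVec (dist A w) q = 0 := by
      rw [← accProb_eq]; exact hrej w hw
    have := (Finset.sum_eq_zero_iff_of_nonneg
      (fun q _ => final_nonneg A w q)).mp h0 q hq.2
    rw [this] at hq
    exact lt_irrefl 0 hq.1

lemma L_sub (hacc : ∀ w ∈ L, A.accProb w = 1) {w : List α} (hw : w ∈ L) :
    FS A w ⊆ A.F := by
  intro i hi
  rw [FS_eq, mem_suppV] at hi
  by_contra hiF
  have h1 : ∑ q ∈ A.F, A.Vdollar.mulVec (dist A w) q = 1 := by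
    rw [← accProb_eq]; exact hacc w hw
  have h2 := Finset.sum_sdiff (Finset.subset_univ A.F)
    (f := fun q => A.Vdollar.mulVec (dist A w) q)
  rw [h1, final_sum] at h2
  have h3 : ∑ q ∈ Finset.univ \ A.F, A.Vdollar.mulVec (dist A w) q = 0 := by linarith
  have h4 := (Finset.sum_eq_zero_iff_of_nonneg
    (fun q _ => final_nonneg A w q)).mp h3 i (by simp [hiF])
  rw [h4] at hi
  exact lt_irrefl 0 hi

lemma subset_phi_idem (u : List α)
    (hid : ∀ S, phi A u (phi A u S) = phi A u S) (S : Finset (Fin A.n)) :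
    S ⊆ phi A u S := by
  have h1 : phi A u (S ∪ phi A u S) = phi A u S := by
    rw [phi_union, hid, Finset.union_self]
  have h2 : (S ∪ phi A u S).card ≤ (phi A u S).card := by
    have := phi_card A u (S ∪ phi A u S)
    rwa [h1] at this
  have h3 := Finset.eq_of_subset_of_card_le Finset.subset_union_right h2
  intro i hi
  rw [h3]
  exact Finset.mem_union_left _ hi

lemma key_eq (hacc : ∀ w ∈ L, A.accProb w = 1) (hrej : ∀ w ∉ L, A.accProb w = 0)
    (u : List α) (hid : ∀ S, phi A u (phi A u S) = phi A u S) (x y : List α) :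
    (x ++ u ++ y ∈ L ↔ x ++ y ∈ L) := by
  have hsub : FS A (x ++ y) ⊆ FS A (x ++ u ++ y) := by
    unfold FS
    rw [phi_append, phi_append, phi_append]
    exact fm_mono (phi_mono A y (subset_phi_idem u hid _))
  constructor
  · intro h
    have h1 : FS A (x ++ y) ⊆ A.F := hsub.trans (L_sub hacc h)
    obtain ⟨q, hq⟩ := FS_nonempty A (x ++ y)
    exact (mem_L hacc hrej _).mpr ⟨q, Finset.mem_inter.mpr ⟨hq, h1 hq⟩⟩
  · intro h
    obtain ⟨q, hq⟩ := (mem_L hacc hrej _).mp h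
    rw [Finset.mem_inter] at hq
    exact (mem_L hacc hrej _).mpr ⟨q, Finset.mem_inter.mpr ⟨hsub hq.1, hq.2⟩⟩

end Lang

section Machine
variable {α : Type} (A : PRAC α)

def Mt : Type := {t : Finset (Fin A.n) → Finset (Fin A.n) // ∃ w : List α, t = phi A w}

instance : Finite (Mt A) := Subtype.finite

noncomputable def Acc0 (S : Finset (Fin A.n)) : Prop := ((fm A.Vdollar S) ∩ A.F).Nonempty

noncomputable def beta (x : List α) (t : Mt A) : Bool :=
  @decide (Acc0 A (t.1 (phi A x (S0 A)))) (Classical.propDecidable _)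

def Sig : Type := {g : Mt A → Bool // ∃ x : List α, g = beta A x}

instance : Finite (Sig A) := Subtype.finite

noncomputable def extM (a : α) (t : Mt A) : Mt A :=
  ⟨fun S => t.1 (fm (A.V a) S), by
    obtain ⟨w, hw⟩ := t.2
    exact ⟨a :: w, by funext S; rw [hw, phi_cons]⟩⟩

lemma beta_step (x : List α) (a : α) (t : Mt A) :
    beta A (x ++ [a]) t = beta A x (extM A a t) := by
  have h : phi A (x ++ [a]) (S0 A) = fm (A.V a) (phi A x (S0 A)) := by
    rw [phi_append]; rfl
  exact decide_eq_decide.mpr (by rw [show (extM A a t).1 = fun S => t.1 (fm (A.V a) S) from rfl, h])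

noncomputable def dstep (g : Sig A) (a : α) : Sig A :=
  ⟨fun t => g.1 (extM A a t), by
    obtain ⟨x, hx⟩ := g.2
    refine ⟨x ++ [a], ?_⟩
    funext t
    rw [hx, ← beta_step]⟩

noncomputable def idMt : Mt A := ⟨fun S => S, ⟨[], rfl⟩⟩

noncomputable def theDFA : DFA α (Sig A) where
  step := fun g a => dstep A g a
  start := ⟨beta A [], ⟨[], rfl⟩⟩
  accept := {g | g.1 (idMt A) = true}

lemma eval_eq : ∀ (w x : List α) (g : Sig A), g.1 = beta A x →
    ((theDFA A).evalFrom g w).1 = beta A (x ++ w) := by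
  intro w
  induction w with
  | nil => intro x g hg; simpa using hg
  | cons a w ih =>
    intro x g hg
    have hstep : ((theDFA A).step g a).1 = beta A (x ++ [a]) := by
      funext t
      show g.1 (extM A a t) = _
      rw [hg, ← beta_step]
    have h2 := ih (x ++ [a]) ((theDFA A).step g a) hstep
    show ((theDFA A).evalFrom ((theDFA A).step g a) w).1 = beta A (x ++ a :: w)
    rw [h2, List.append_assoc]
    rfl

lemma accepts_iff (w : List α) :
    w ∈ (theDFA A).accepts ↔ Acc0 A (phi A w (S0 A)) := by
  rw [DFA.mem_accepts]
  have h := eval_eq A w [] (theDFA A).start rfl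
  show (((theDFA A).evalFrom (theDFA A).start w).1 (idMt A) = true) ↔ _
  rw [h]
  simp only [List.nil_append, beta, idMt, decide_eq_true_iff]
  exact @decide_eq_true_iff _ (Classical.propDecidable _)

end Machine

end PRACAux

/-- If a PRA-C recognizes a language with probability 1, the language is recognized by a
permutation automaton. -/
theorem prac_prob_one_permutation_automaton {α : Type} (L : Set (List α)) (A : PRAC α)
    (hacc : ∀ w ∈ L, A.accProb w = 1) (hrej : ∀ w ∉ L, A.accProb w = 0) :
    ∃ (σ : Type) (_ : Fintype σ) (D : DFA α σ),
      (∀ w, w ∈ D.accepts ↔ w ∈ L) ∧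
      ∀ a : α, Function.Bijective (fun q => D.step q a) := by
  classical
  refine ⟨PRACAux.Sig A, Fintype.ofFinite _, PRACAux.theDFA A, ?_, ?_⟩
  · intro w
    rw [PRACAux.accepts_iff]
    exact (PRACAux.mem_L hacc hrej w).symm
  · intro a
    obtain ⟨k, hk1, hkid⟩ := PRACAux.exists_idem (PRACAux.fm (A.V a))
    have hid : ∀ S, PRACAux.phi A (List.replicate k a) (PRACAux.phi A (List.replicate k a) S) =
        PRACAux.phi A (List.replicate k a) S := by
      intro S
      rw [PRACAux.phi_replicate, PRACAux.phi_replicate]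
      exact congrFun hkid S
    have hsurj : Function.Surjective (fun g => (PRACAux.theDFA A).step g a) := by
      intro g
      obtain ⟨x, hx⟩ := g.2
      refine ⟨⟨PRACAux.beta A (x ++ List.replicate (k-1) a), ⟨_, rfl⟩⟩, ?_⟩
      apply Subtype.ext
      show (fun t => PRACAux.beta A (x ++ List.replicate (k-1) a) (PRACAux.extM A a t)) = g.1
      funext t
      rw [← PRACAux.beta_step]
      have hlist : (x ++ List.replicate (k-1) a) ++ [a] = x ++ List.replicate k a := by
        rw [List.append_assoc, ← List.replicate_succ']
        congr 2
        omega
      rw [hlist, hx]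
      obtain ⟨y, hy⟩ := t.2
      apply decide_eq_decide.mpr
      rw [hy, ← PRACAux.phi_append, ← PRACAux.phi_append]
      have e1 := PRACAux.mem_L hacc hrej (x ++ List.replicate k a ++ y)
      have e2 := PRACAux.mem_L hacc hrej (x ++ y)
      have e3 := PRACAux.key_eq hacc hrej (List.replicate k a) hid x y
      exact Iff.trans e1.symm (e3.trans e2)
    exact ⟨Finite.injective_iff_surjective.mpr hsurj, hsurj⟩
end

section
/- Let Σ and T be finite alphabets, let h : Σ → T* be a map, and let h* : Σ* → T* be the induced monoid homomorphism (h* applied to a word is the concatenation of the images of its letters). If a language L ⊆ T* is recognized by a PRA-C with interval (p₁,p₂), then the language (h*)⁻¹(L) ⊆ Σ* is recognized by a PRA-C with the same interval (p₁,p₂). -/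
/-- The class of languages recognized by PRA-C is closed under inverse homomorphisms:
if `L ⊆ T*` is recognized with interval `(p₁,p₂)` and `h : Σ → T*` induces the monoid
homomorphism `h* : Σ* → T*`, then `(h*)⁻¹(L)` is recognized with the same interval. -/
theorem prac_closed_inverse_hom {α β : Type} [Fintype α] [Fintype β]
    (h : α → List β) (L : Set (List β)) (A : PRAC β) (p1 p2 : ℝ)
    (hr : A.Recognizes L p1 p2) :
    ∃ B : PRAC α, B.Recognizes {w : List α | w.flatMap h ∈ L} p1 p2 := by
  -- matrix of a word
  set M : List β → Matrix (Fin A.n) (Fin A.n) ℝ :=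
    fun l => l.foldl (fun P b => A.V b * P) 1 with hM
  have foldl_eq : ∀ (l : List β) (P : Matrix (Fin A.n) (Fin A.n) ℝ),
      l.foldl (fun Q b => A.V b * Q) P = M l * P := by
    intro l
    induction l with
    | nil => intro P; simp [hM]
    | cons b l ih =>
      intro P
      simp only [List.foldl_cons, hM] at *
      rw [ih, ih (A.V b * 1)]
      noncomm_ring
  have ds_M : ∀ l, DoublyStochastic (M l) := by
    intro l
    induction l with
    | nil =>
      refine ⟨fun i j => ?_, fun i => ?_, fun j => ?_⟩ <;>
        simp [hM, Matrix.one_apply, apply_ite]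
    | cons b l ih =>
      rw [show M (b :: l) = M l * A.V b by
        simp only [hM, List.foldl_cons]; rw [foldl_eq, mul_one]]
      obtain ⟨h1, h2, h3⟩ := ih
      obtain ⟨g1, g2, g3⟩ := A.ds b
      refine ⟨fun i j => ?_, fun i => ?_, fun j => ?_⟩
      · simp only [Matrix.mul_apply]
        exact Finset.sum_nonneg fun k _ => mul_nonneg (h1 i k) (g1 k j)
      · calc ∑ j, (M l * A.V b) i j
            = ∑ j, ∑ k, M l i k * A.V b k j := by simp [Matrix.mul_apply]
          _ = 1 := by
              rw [Finset.sum_comm]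
              simp_rw [← Finset.mul_sum, g2]
              simpa using h2 i
      · calc ∑ i, (M l * A.V b) i j
            = ∑ i, ∑ k, M l i k * A.V b k j := by simp [Matrix.mul_apply]
          _ = 1 := by
              rw [Finset.sum_comm]
              simp_rw [← Finset.sum_mul, h3]
              simpa using g3 j
  -- define B
  let B : PRAC α :=
    { n := A.n, q0 := A.q0, F := A.F,
      V := fun a => M (h a),
      Vhash := A.Vhash, Vdollar := A.Vdollar,
      ds := fun a => ds_M (h a),
      ds_hash := A.ds_hash, ds_dollar := A.ds_dollar }
  have mulVec_M : ∀ (l : List β) (v : Fin A.n → ℝ),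
      (M l).mulVec v = l.foldl (fun v b => (A.V b).mulVec v) v := by
    intro l
    induction l with
    | nil => intro v; simp [hM]
    | cons b l ih =>
      intro v
      rw [show M (b :: l) = M l * A.V b by
        simp only [hM, List.foldl_cons]; rw [foldl_eq, mul_one]]
      rw [← Matrix.mulVec_mulVec, ih]
      simp
  have acc_eq : ∀ w : List α, B.accProb w = A.accProb (w.flatMap h) := by
    intro w
    have key : ∀ v : Fin A.n → ℝ, w.foldl (fun v a => (M (h a)).mulVec v) v
        = (w.flatMap h).foldl (fun v b => (A.V b).mulVec v) v := by
      induction w with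
      | nil => intro v; simp
      | cons a w ih =>
        intro v
        simp only [List.foldl_cons, List.flatMap_cons, List.foldl_append]
        rw [mulVec_M, ih]
    show (∑ q ∈ A.F, (A.Vdollar.mulVec (w.foldl (fun v a => (M (h a)).mulVec v)
        (A.Vhash.mulVec (Pi.single A.q0 1)))) q) = _
    rw [key]
    rfl
  obtain ⟨h0, h12, h21, hin, hout⟩ := hr
  refine ⟨B, h0, h12, h21, fun w hw => ?_, fun w hw => ?_⟩
  · rw [acc_eq]; exact hin _ hw
  · rw [acc_eq]; exact hout _ hw
end

section
/- For every natural number n ≥ 1, the language Lₙ = a₁*a₂*…aₙ* over the n-letter alphabet {a₁,…,aₙ} (i.e., the set of words whose letters occur in nondecreasing index order, equivalently the sorted lists over Fin n) is recognized by a PRA-C with n+1 states with interval (1 − 1/(⌊n²/4⌋ + n + 1), 1). -/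
namespace SortedPRAC

variable (n : ℕ)

/-- Two-level vector: value `c₁` on states `< t`, value `c₂` on states `≥ t`. -/
def vecc (t : ℕ) (c₁ c₂ : ℝ) : Fin (n+1) → ℝ := fun i => if (i:ℕ) < t then c₁ else c₂

/-- Transition matrix for letter `a`: uniform mixing on `{0,…,a}` and on `{a+1,…,n}`. -/
noncomputable def Vmat (a : Fin n) : Matrix (Fin (n+1)) (Fin (n+1)) ℝ := fun i j =>
  if (i:ℕ) < (a:ℕ)+1 then (if (j:ℕ) < (a:ℕ)+1 then ((a:ℝ)+1)⁻¹ else 0)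
  else (if (j:ℕ) < (a:ℕ)+1 then 0 else ((n:ℝ)-(a:ℕ))⁻¹)

lemma sum_ite3 (p q : ℕ) (hpq : p ≤ q) (hq : q ≤ n+1) (x y z : ℝ) :
    ∑ j : Fin (n+1), (if (j:ℕ) < p then x else if (j:ℕ) < q then y else z)
      = (p : ℝ) * x + ((q - p : ℕ) : ℝ) * y + ((n + 1 - q : ℕ) : ℝ) * z := by
  rw [Fin.sum_univ_eq_sum_range (fun j => if j < p then x else if j < q then y else z)]
  rw [← Finset.sum_range_add_sum_Ico _ hq, ← Finset.sum_range_add_sum_Ico _ hpq]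
  have h1 : ∑ j ∈ Finset.range p, (if j < p then x else if j < q then y else z)
      = (p:ℝ) * x := by
    have e : ∀ j ∈ Finset.range p, (if j < p then x else if j < q then y else z) = x :=
      fun j hj => by rw [Finset.mem_range] at hj; simp [hj]
    rw [Finset.sum_congr rfl e, Finset.sum_const, Finset.card_range, nsmul_eq_mul]
  have h2 : ∑ j ∈ Finset.Ico p q, (if j < p then x else if j < q then y else z)
      = ((q - p : ℕ):ℝ) * y := by
    have e : ∀ j ∈ Finset.Ico p q, (if j < p then x else if j < q then y else z) = y :=
      fun j hj => by
        rw [Finset.mem_Ico] at hj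
        have hnp : ¬ j < p := not_lt.2 hj.1
        simp [hnp, hj.2]
    rw [Finset.sum_congr rfl e, Finset.sum_const, Nat.card_Ico, nsmul_eq_mul]
  have h3 : ∑ j ∈ Finset.Ico q (n+1), (if j < p then x else if j < q then y else z)
      = ((n + 1 - q : ℕ):ℝ) * z := by
    have e : ∀ j ∈ Finset.Ico q (n+1), (if j < p then x else if j < q then y else z) = z :=
      fun j hj => by
        rw [Finset.mem_Ico] at hj
        have ha : ¬ j < p := not_lt.2 (hpq.trans hj.1)
        have hb : ¬ j < q := not_lt.2 hj.1
        simp [ha, hb]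
    rw [Finset.sum_congr rfl e, Finset.sum_const, Nat.card_Ico, nsmul_eq_mul]
  rw [h1, h2, h3]

lemma sum_ite2 (p : ℕ) (hp : p ≤ n+1) (x y : ℝ) :
    ∑ j : Fin (n+1), (if (j:ℕ) < p then x else y)
      = (p : ℝ) * x + ((n + 1 - p : ℕ) : ℝ) * y := by
  have := sum_ite3 n p p le_rfl hp x y y
  simpa using this


lemma Vmat_symm (a : Fin n) (i j : Fin (n+1)) : Vmat n a i j = Vmat n a j i := by
  unfold Vmat
  by_cases hi : (i:ℕ) < (a:ℕ)+1 <;> by_cases hj : (j:ℕ) < (a:ℕ)+1 <;> simp [hi, hj]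

lemma Vmat_row_sum (a : Fin n) (i : Fin (n+1)) : ∑ j, Vmat n a i j = 1 := by
  have ha : (a:ℕ) < n := a.isLt
  have ha1 : (a:ℕ)+1 ≤ n+1 := by omega
  by_cases hi : (i:ℕ) < (a:ℕ)+1
  · have : ∑ j, Vmat n a i j
        = ∑ j : Fin (n+1), (if (j:ℕ) < (a:ℕ)+1 then ((a:ℝ)+1)⁻¹ else 0) := by
      refine Finset.sum_congr rfl fun j _ => ?_
      unfold Vmat; simp [hi]
    rw [this, sum_ite2 n _ ha1]
    have : ((a:ℝ)+1) ≠ 0 := by positivity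
    field_simp
    push_cast; ring
  · have : ∑ j, Vmat n a i j
        = ∑ j : Fin (n+1), (if (j:ℕ) < (a:ℕ)+1 then 0 else ((n:ℝ)-(a:ℕ))⁻¹) := by
      refine Finset.sum_congr rfl fun j _ => ?_
      unfold Vmat; simp [hi]
    rw [this, sum_ite2 n _ ha1]
    have hc : ((n + 1 - ((a:ℕ)+1) : ℕ) : ℝ) = (n:ℝ) - (a:ℕ) := by
      have : (n + 1 - ((a:ℕ)+1) : ℕ) = n - a := by omega
      rw [this, Nat.cast_sub ha.le]
    rw [hc]
    have : (n:ℝ) - (a:ℕ) ≠ 0 := by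
      have : (a:ℝ) < n := by exact_mod_cast ha
      linarith
    field_simp
    simp

lemma Vmat_ds (a : Fin n) : DoublyStochastic (Vmat n a) := by
  refine ⟨fun i j => ?_, fun i => Vmat_row_sum n a i, fun j => ?_⟩
  · unfold Vmat
    have ha : (a:ℕ) < n := a.isLt
    have h1 : (0:ℝ) ≤ ((a:ℝ)+1)⁻¹ := by positivity
    have h2 : (0:ℝ) ≤ ((n:ℝ)-(a:ℕ))⁻¹ := by
      have : (a:ℝ) < n := by exact_mod_cast ha
      have : (0:ℝ) ≤ (n:ℝ)-(a:ℕ) := by linarith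
      positivity
    split_ifs <;> simp [h1, h2]
  · have : ∑ i, Vmat n a i j = ∑ i, Vmat n a j i :=
      Finset.sum_congr rfl fun i _ => Vmat_symm n a i j
    rw [this, Vmat_row_sum]

lemma one_ds : DoublyStochastic (1 : Matrix (Fin (n+1)) (Fin (n+1)) ℝ) := by
  refine ⟨fun i j => ?_, fun i => ?_, fun j => ?_⟩
  · rw [Matrix.one_apply]; split_ifs <;> norm_num
  · simp [Matrix.one_apply]
  · simp [Matrix.one_apply]

/-- `V_a` applied to a two-level vector, when `t ≤ a+1`. -/
lemma stepA (a : Fin n) (t : ℕ) (ht : t ≤ (a:ℕ)+1) (c₁ c₂ : ℝ) :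
    (Vmat n a).mulVec (vecc n t c₁ c₂)
      = vecc n ((a:ℕ)+1)
          (((t:ℝ) * c₁ + (((a:ℕ)+1-t : ℕ):ℝ) * c₂) / ((a:ℝ)+1)) c₂ := by
  have ha : (a:ℕ) < n := a.isLt
  have ha1 : (a:ℕ)+1 ≤ n+1 := by omega
  funext i
  rw [Matrix.mulVec]
  show ∑ j, Vmat n a i j * vecc n t c₁ c₂ j = _
  by_cases hi : (i:ℕ) < (a:ℕ)+1
  · have he : ∀ j ∈ Finset.univ, Vmat n a i j * vecc n t c₁ c₂ j
        = (if (j:ℕ) < t then ((a:ℝ)+1)⁻¹ * c₁ else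
            if (j:ℕ) < (a:ℕ)+1 then ((a:ℝ)+1)⁻¹ * c₂ else 0) := by
      intro j _
      unfold Vmat vecc
      by_cases hjt : (j:ℕ) < t
      · have : (j:ℕ) < (a:ℕ)+1 := lt_of_lt_of_le hjt ht
        simp [hi, hjt, this]
      · by_cases hja : (j:ℕ) < (a:ℕ)+1 <;> simp [hi, hjt, hja]
    rw [Finset.sum_congr rfl he, sum_ite3 n t ((a:ℕ)+1) ht ha1]
    unfold vecc
    simp only [hi, if_pos]
    have hane : ((a:ℝ)+1) ≠ 0 := by positivity
    field_simp
    try ring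
  · have he : ∀ j ∈ Finset.univ, Vmat n a i j * vecc n t c₁ c₂ j
        = (if (j:ℕ) < (a:ℕ)+1 then 0 else ((n:ℝ)-(a:ℕ))⁻¹ * c₂) := by
      intro j _
      unfold Vmat vecc
      by_cases hja : (j:ℕ) < (a:ℕ)+1
      · simp [hi, hja]
      · have : ¬ (j:ℕ) < t := fun h => hja (lt_of_lt_of_le h ht)
        simp [hi, hja, this]
    rw [Finset.sum_congr rfl he, sum_ite2 n _ ha1]
    unfold vecc
    simp only [hi, if_neg]
    have hc : ((n + 1 - ((a:ℕ)+1) : ℕ) : ℝ) = (n:ℝ) - (a:ℕ) := by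
      have h : (n + 1 - ((a:ℕ)+1) : ℕ) = n - a := by omega
      rw [h, Nat.cast_sub ha.le]
    rw [hc]
    have : (n:ℝ) - (a:ℕ) ≠ 0 := by
      have : (a:ℝ) < n := by exact_mod_cast ha
      linarith
    field_simp
    simp

/-- `V_a` applied to a two-level vector, when `a+1 < t`. -/
lemma stepB (a : Fin n) (t : ℕ) (ht : (a:ℕ)+1 < t) (htn : t ≤ n+1) (c₁ c₂ : ℝ) :
    (Vmat n a).mulVec (vecc n t c₁ c₂)
      = vecc n ((a:ℕ)+1) c₁
          (((((t-((a:ℕ)+1) : ℕ)):ℝ) * c₁ + (((n+1-t : ℕ)):ℝ) * c₂) / ((n:ℝ)-(a:ℕ))) := by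
  have ha : (a:ℕ) < n := a.isLt
  have ha1 : (a:ℕ)+1 ≤ n+1 := by omega
  funext i
  rw [Matrix.mulVec]
  show ∑ j, Vmat n a i j * vecc n t c₁ c₂ j = _
  by_cases hi : (i:ℕ) < (a:ℕ)+1
  · have he : ∀ j ∈ Finset.univ, Vmat n a i j * vecc n t c₁ c₂ j
        = (if (j:ℕ) < (a:ℕ)+1 then ((a:ℝ)+1)⁻¹ * c₁ else 0) := by
      intro j _
      unfold Vmat vecc
      by_cases hja : (j:ℕ) < (a:ℕ)+1
      · have : (j:ℕ) < t := lt_trans hja ht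
        simp [hi, hja, this]
      · simp [hi, hja]
    rw [Finset.sum_congr rfl he, sum_ite2 n _ ha1]
    unfold vecc
    simp only [hi, if_pos]
    have hane : ((a:ℝ)+1) ≠ 0 := by positivity
    field_simp
    try ring
    push_cast; ring
  · have he : ∀ j ∈ Finset.univ, Vmat n a i j * vecc n t c₁ c₂ j
        = (if (j:ℕ) < (a:ℕ)+1 then 0 else
            if (j:ℕ) < t then ((n:ℝ)-(a:ℕ))⁻¹ * c₁ else ((n:ℝ)-(a:ℕ))⁻¹ * c₂) := by
      intro j _
      unfold Vmat vecc
      by_cases hja : (j:ℕ) < (a:ℕ)+1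
      · have : (j:ℕ) < t := lt_trans hja ht
        simp [hi, hja, this]
      · by_cases hjt : (j:ℕ) < t <;> simp [hi, hja, hjt]
    rw [Finset.sum_congr rfl he, sum_ite3 n ((a:ℕ)+1) t ht.le htn]
    unfold vecc
    simp only [hi, if_neg]
    have hna : (0:ℝ) < (n:ℝ) - (a:ℕ) := by
      have : (a:ℝ) < n := by exact_mod_cast ha
      linarith
    field_simp
    try ring
    simp only [if_false]
    field_simp

lemma convex_min_le (p q x y : ℝ) (hp : 0 ≤ p) (hq : 0 ≤ q) (hpq : 0 < p + q) :
    min x y ≤ (p * x + q * y) / (p + q) := by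
  rw [le_div_iff₀ hpq]
  have h1 := mul_le_mul_of_nonneg_left (min_le_left x y) hp
  have h2 := mul_le_mul_of_nonneg_left (min_le_right x y) hq
  nlinarith

/-- Folding any word preserves the two-level shape, the mass, nonnegativity,
and does not decrease `min c₁ c₂`. -/
lemma fold_min (w : List (Fin n)) : ∀ t (c₁ c₂ : ℝ), 1 ≤ t → t ≤ n →
    0 ≤ c₁ → 0 ≤ c₂ → (t:ℝ) * c₁ + ((n+1-t : ℕ):ℝ) * c₂ = 1 →
    ∃ t' c₁' c₂', 1 ≤ t' ∧ t' ≤ n ∧ 0 ≤ c₁' ∧ 0 ≤ c₂' ∧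
      ((t':ℝ) * c₁' + ((n+1-t' : ℕ):ℝ) * c₂' = 1) ∧
      min c₁ c₂ ≤ min c₁' c₂' ∧
      w.foldl (fun v a => (Vmat n a).mulVec v) (vecc n t c₁ c₂) = vecc n t' c₁' c₂' := by
  induction w with
  | nil =>
    intro t c₁ c₂ h1 h2 h3 h4 h5
    exact ⟨t, c₁, c₂, h1, h2, h3, h4, h5, le_rfl, rfl⟩
  | cons a w ih =>
    intro t c₁ c₂ h1 h2 h3 h4 h5
    have ha : (a:ℕ) < n := a.isLt
    by_cases hta : t ≤ (a:ℕ)+1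
    · -- case A
      set d₁ : ℝ := ((t:ℝ) * c₁ + (((a:ℕ)+1-t : ℕ):ℝ) * c₂) / ((a:ℝ)+1) with hd₁
      have hsub : (((a:ℕ)+1-t : ℕ):ℝ) = ((a:ℝ)+1) - (t:ℝ) := by
        rw [Nat.cast_sub hta]; push_cast; ring
      have hpos : (0:ℝ) < (a:ℝ)+1 := by positivity
      have hd₁0 : 0 ≤ d₁ := by
        apply div_nonneg _ hpos.le
        have : (0:ℝ) ≤ (((a:ℕ)+1-t : ℕ):ℝ) := by positivity
        have ht0 : (0:ℝ) ≤ (t:ℝ) := by positivity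
        positivity
      have hmass : ((((a:ℕ)+1 : ℕ)):ℝ) * d₁ + ((n+1-((a:ℕ)+1) : ℕ):ℝ) * c₂ = 1 := by
        have e1 : ((n+1-((a:ℕ)+1) : ℕ):ℝ) = (n:ℝ) - (a:ℕ) := by
          have h : (n + 1 - ((a:ℕ)+1) : ℕ) = n - a := by omega
          rw [h, Nat.cast_sub ha.le]
        have e2 : ((n+1-t : ℕ):ℝ) = (n:ℝ)+1 - (t:ℝ) := by
          rw [Nat.cast_sub (by omega)]; push_cast; ring
        have key : ((((a:ℕ)+1 : ℕ)):ℝ) * d₁ = (t:ℝ) * c₁ + ((a:ℝ)+1-(t:ℝ)) * c₂ := by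
          rw [hd₁, hsub]
          push_cast
          field_simp
        rw [e1, key]
        rw [e2] at h5
        push_cast
        linarith
      have hmin : min c₁ c₂ ≤ min d₁ c₂ := by
        apply le_min _ (min_le_right c₁ c₂)
        rw [hd₁]
        have h := convex_min_le (t:ℝ) (((a:ℕ)+1-t : ℕ):ℝ) c₁ c₂ (by positivity) (by positivity)
          (by rw [hsub]; push_cast; linarith [hpos])
        calc min c₁ c₂ ≤ _ := h
        _ = ((t:ℝ) * c₁ + (((a:ℕ)+1-t : ℕ):ℝ) * c₂) / ((a:ℝ)+1) := by
            rw [hsub]; push_cast; ring_nf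
      obtain ⟨t', c₁', c₂', g1, g2, g3, g4, g5, g6, g7⟩ :=
        ih ((a:ℕ)+1) d₁ c₂ (by omega) (by omega) hd₁0 h4 hmass
      refine ⟨t', c₁', c₂', g1, g2, g3, g4, g5, le_trans hmin g6, ?_⟩
      rw [List.foldl_cons, stepA n a t hta, ← hd₁, g7]
    · -- case B
      push_neg at hta
      set d₂ : ℝ := ((((t-((a:ℕ)+1) : ℕ)):ℝ) * c₁ + (((n+1-t : ℕ)):ℝ) * c₂) / ((n:ℝ)-(a:ℕ)) with hd₂
      have hna : (0:ℝ) < (n:ℝ) - (a:ℕ) := by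
        have : (a:ℝ) < n := by exact_mod_cast ha
        linarith
      have hsub1 : (((t-((a:ℕ)+1) : ℕ)):ℝ) = (t:ℝ) - ((a:ℝ)+1) := by
        rw [Nat.cast_sub (by omega)]; push_cast; ring
      have hsub2 : (((n+1-t : ℕ)):ℝ) = (n:ℝ)+1 - (t:ℝ) := by
        rw [Nat.cast_sub (by omega)]; push_cast; ring
      have hd₂0 : 0 ≤ d₂ := by
        apply div_nonneg _ hna.le
        have w1 : (0:ℝ) ≤ (((t-((a:ℕ)+1) : ℕ)):ℝ) := by positivity
        have w2 : (0:ℝ) ≤ (((n+1-t : ℕ)):ℝ) := by positivity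
        positivity
      have hmass : ((((a:ℕ)+1 : ℕ)):ℝ) * c₁ + ((n+1-((a:ℕ)+1) : ℕ):ℝ) * d₂ = 1 := by
        have e1 : ((n+1-((a:ℕ)+1) : ℕ):ℝ) = (n:ℝ) - (a:ℕ) := by
          have h : (n + 1 - ((a:ℕ)+1) : ℕ) = n - a := by omega
          rw [h, Nat.cast_sub ha.le]
        have key : ((n:ℝ) - (a:ℕ)) * d₂ = ((t:ℝ)-((a:ℝ)+1)) * c₁ + ((n:ℝ)+1-(t:ℝ)) * c₂ := by
          rw [hd₂, hsub1, hsub2]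
          field_simp
        rw [e1, key]
        rw [hsub2] at h5
        push_cast
        linarith
      have hmin : min c₁ c₂ ≤ min c₁ d₂ := by
        apply le_min (min_le_left c₁ c₂)
        rw [hd₂]
        have hw : (((t-((a:ℕ)+1) : ℕ)):ℝ) + (((n+1-t : ℕ)):ℝ) = (n:ℝ) - (a:ℕ) := by
          rw [hsub1, hsub2]; ring
        have h := convex_min_le (((t-((a:ℕ)+1) : ℕ)):ℝ) (((n+1-t : ℕ)):ℝ) c₁ c₂
          (by positivity) (by positivity) (by rw [hw]; exact hna)
        calc min c₁ c₂ ≤ _ := h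
        _ = _ := by rw [hw]
      obtain ⟨t', c₁', c₂', g1, g2, g3, g4, g5, g6, g7⟩ :=
        ih ((a:ℕ)+1) c₁ d₂ (by omega) (by omega) h3 hd₂0 hmass
      refine ⟨t', c₁', c₂', g1, g2, g3, g4, g5, le_trans hmin g6, ?_⟩
      rw [List.foldl_cons, stepB n a t hta (by omega), ← hd₂, g7]

/-- Folding a sorted (chain) word ending in `a` yields the uniform vector on `{0,…,a}`. -/
lemma fold_sorted (w : List (Fin n)) : ∀ (a : Fin n) (t : ℕ), 1 ≤ t → t ≤ n →
    List.IsChain (· ≤ ·) (w ++ [a]) → (∀ y ∈ (w ++ [a]).head?, t ≤ (y:ℕ)+1) →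
    (w ++ [a]).foldl (fun v b => (Vmat n b).mulVec v) (vecc n t ((t:ℝ))⁻¹ 0)
      = vecc n ((a:ℕ)+1) (((((a:ℕ)+1 : ℕ)):ℝ))⁻¹ 0 := by
  induction w with
  | nil =>
    intro a t h1 h2 _ hhead
    have hta : t ≤ (a:ℕ)+1 := hhead a rfl
    simp only [List.nil_append, List.foldl_cons, List.foldl_nil]
    rw [stepA n a t hta]
    congr 1
    have htne : ((t:ℝ)) ≠ 0 := by
      have : 0 < t := h1
      positivity
    push_cast
    field_simp
    simp
  | cons c w ih =>
    intro a t h1 h2 hchain hhead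
    have hc : (c:ℕ) < n := c.isLt
    have htc : t ≤ (c:ℕ)+1 := hhead c rfl
    have hne : (w ++ [a]) ≠ [] := by simp
    rw [List.cons_append, List.isChain_cons] at hchain
    obtain ⟨hh, hch⟩ := hchain
    have hstep : (Vmat n c).mulVec (vecc n t ((t:ℝ))⁻¹ 0)
        = vecc n ((c:ℕ)+1) (((((c:ℕ)+1 : ℕ)):ℝ))⁻¹ 0 := by
      rw [stepA n c t htc]
      congr 1
      have htne : ((t:ℝ)) ≠ 0 := by
        have : 0 < t := h1
        positivity
      push_cast
      field_simp
      simp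
    have hhead' : ∀ y ∈ (w ++ [a]).head?, (c:ℕ)+1 ≤ (y:ℕ)+1 := by
      intro y hy
      have : (c:ℕ) ≤ (y:ℕ) := hh y hy
      omega
    have := ih a ((c:ℕ)+1) (by omega) (by omega) hch hhead'
    rw [List.cons_append, List.foldl_cons, hstep, this]
/-- Any non-chain word has a first descent, with a sorted prefix before it. -/
lemma exists_descent {α : Type*} [LinearOrder α] :
    ∀ (w : List α), ¬ List.IsChain (· ≤ ·) w →
    ∃ (u : List α) (a b : α) (v : List α),
      w = u ++ a :: b :: v ∧ List.IsChain (· ≤ ·) (u ++ [a]) ∧ b < a := by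
  intro w
  induction w with
  | nil => intro h; exact absurd List.isChain_nil h
  | cons c w ih =>
    intro h
    by_cases hB : List.IsChain (· ≤ ·) w
    · have hA : ¬ ∀ y ∈ w.head?, c ≤ y := by
        intro hA; exact h (List.isChain_cons.mpr ⟨hA, hB⟩)
      cases w with
      | nil => simp at hA
      | cons d v =>
        have hcd : ¬ c ≤ d := by
          intro hcd
          refine hA fun y hy => ?_
          simp at hy
          subst hy
          exact hcd
        exact ⟨[], c, d, v, rfl, List.isChain_singleton c, not_le.mp hcd⟩
    · obtain ⟨u, a, b, v, rfl, hua, hba⟩ := ih hB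
      cases u with
      | nil =>
        by_cases hca : c ≤ a
        · exact ⟨[c], a, b, v, rfl, List.isChain_pair.mpr hca, hba⟩
        · exact ⟨[], c, a, b :: v, rfl, List.isChain_singleton c, not_le.mp hca⟩
      | cons d u =>
        by_cases hcd : c ≤ d
        · refine ⟨c :: d :: u, a, b, v, rfl, ?_, hba⟩
          rw [List.cons_append, List.isChain_cons]
          refine ⟨fun y hy => ?_, hua⟩
          simp [List.head?] at hy
          rw [← hy]; exact hcd
        · exact ⟨[], c, d, u ++ a :: b :: v, rfl, List.isChain_singleton c, not_le.mp hcd⟩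

/-- The key combinatorial inequality. -/
lemma key_nat (n a b : ℕ) (hb : b < a) (ha : a < n) :
    (a+1)*(n-b) ≤ (n^2/4+n+1)*(a-b) := by
  set M := n^2/4+n+1 with hM
  have prodle : ∀ p q : ℕ, p + q = n+2 → p*q ≤ M := by
    intro p q hpq
    have h4 : 4*(p*q) ≤ (n+2)^2 := by
      rw [← hpq]
      rcases le_total p q with h | h
      · obtain ⟨e, rfl⟩ := Nat.exists_eq_add_of_le h
        nlinarith [sq_nonneg e]
      · obtain ⟨e, rfl⟩ := Nat.exists_eq_add_of_le h
        nlinarith [sq_nonneg e]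
    have : p*q ≤ (n+2)^2/4 := (Nat.le_div_iff_mul_le (by norm_num)).mpr (by linarith)
    have e : (n+2)^2 = n^2 + (n+1)*4 := by ring
    rw [e, Nat.add_mul_div_right _ _ (by norm_num : 0 < 4)] at this
    omega
  have h1 : (a+1)*(n-a+1) ≤ M := prodle (a+1) (n-a+1) (by omega)
  have h2 : a+1 ≤ M := by
    have : n ≤ M := by
      have := Nat.zero_le (n^2/4)
      omega
    omega
  obtain ⟨d, hd⟩ : ∃ d, a = b + 1 + d := ⟨a - b - 1, by omega⟩
  have e1 : n - b = (n - a + 1) + d := by omega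
  have e2 : a - b = 1 + d := by omega
  calc (a+1)*(n-b) = (a+1)*(n-a+1) + (a+1)*d := by rw [e1, Nat.mul_add]
  _ ≤ M + M*d := Nat.add_le_add h1 (Nat.mul_le_mul_right d h2)
  _ = M*(a-b) := by rw [e2]; ring

open SortedPRAC in
/-- The PRA-C recognizing the sorted words over `Fin n`. -/
noncomputable def Aut (n : ℕ) : PRAC (Fin n) where
  n := n+1
  q0 := 0
  F := Finset.univ.filter (fun q : Fin (n+1) => (q:ℕ) < n)
  V := Vmat n
  Vhash := 1
  Vdollar := 1
  ds := Vmat_ds n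
  ds_hash := one_ds n
  ds_dollar := one_ds n

lemma init_vecc (n : ℕ) : (Pi.single (0 : Fin (n+1)) (1:ℝ)) = vecc n 1 ((1:ℕ):ℝ)⁻¹ 0 := by
  funext i
  unfold vecc
  rcases eq_or_ne i 0 with rfl | hi
  · simp
  · rw [Pi.single_eq_of_ne hi]
    have : ¬ (i:ℕ) < 1 := by
      have := Fin.val_ne_of_ne hi
      simp at this ⊢
      omega
    simp [this]

lemma accProb_eq (n : ℕ) (w : List (Fin n)) :
    (Aut n).accProb w
      = ∑ q ∈ Finset.univ.filter (fun q : Fin (n+1) => (q:ℕ) < n),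
          (w.foldl (fun v a => (Vmat n a).mulVec v) (vecc n 1 ((1:ℕ):ℝ)⁻¹ 0)) q := by
  unfold PRAC.accProb Aut
  simp only [Matrix.one_mulVec, init_vecc]

lemma Fsum (n t : ℕ) (ht : t ≤ n) (c₁ c₂ : ℝ) :
    ∑ q ∈ Finset.univ.filter (fun q : Fin (n+1) => (q:ℕ) < n), vecc n t c₁ c₂ q
      = (t:ℝ) * c₁ + ((n - t : ℕ):ℝ) * c₂ := by
  rw [Finset.sum_filter]
  have e : ∀ q : Fin (n+1),
      (if (q:ℕ) < n then vecc n t c₁ c₂ q else 0)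
        = (if (q:ℕ) < t then c₁ else if (q:ℕ) < n then c₂ else 0) := by
    intro q
    unfold vecc
    by_cases h1 : (q:ℕ) < t
    · have : (q:ℕ) < n := lt_of_lt_of_le h1 ht
      simp [h1, this]
    · by_cases h2 : (q:ℕ) < n <;> simp [h1, h2]
  rw [Finset.sum_congr rfl (fun q _ => e q), sum_ite3 n t n ht (by omega)]
  have : (n + 1 - n : ℕ) = 1 := by omega
  rw [this]
  simp

end SortedPRAC


/-- For every `n ≥ 1`, the language `Lₙ = a₁*a₂*…aₙ*` (the sorted lists over `Fin n`) is
recognized by a PRA-C with `n+1` states with interval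
`(1 - 1/(⌊n²/4⌋ + n + 1), 1)`. -/
theorem prac_recognizes_sorted (n : ℕ) (hn : 1 ≤ n) :
    ∃ A : PRAC (Fin n), A.n = n + 1 ∧
      A.Recognizes {w : List (Fin n) | w.Pairwise (· ≤ ·)}
        (1 - 1 / ((n ^ 2 / 4 + n + 1 : ℕ) : ℝ)) 1 := by

  classical
  set M : ℕ := n ^ 2 / 4 + n + 1 with hMdef
  have hMn : n ≤ M := by
    have := Nat.zero_le (n^2/4)
    omega
  have hM1 : (1:ℝ) ≤ (M:ℝ) := by
    have : 1 ≤ M := by omega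
    exact_mod_cast this
  have hMpos : (0:ℝ) < (M:ℝ) := by linarith
  refine ⟨SortedPRAC.Aut n, rfl, ?_, ?_, le_rfl, ?_, ?_⟩
  · have : 1 / (M:ℝ) ≤ 1 := by
      rw [div_le_one hMpos]; exact hM1
    linarith
  · have : 0 < 1 / (M:ℝ) := by positivity
    linarith
  · -- sorted words are accepted with probability 1
    intro w hw
    rw [SortedPRAC.accProb_eq]
    have hchain : List.IsChain (· ≤ ·) w := List.isChain_iff_pairwise.mpr hw
    rcases List.eq_nil_or_concat w with rfl | ⟨u, a, rfl⟩
    · rw [List.foldl_nil, SortedPRAC.Fsum n 1 hn]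
      simp
    · rw [List.concat_eq_append] at hchain ⊢
      rw [SortedPRAC.fold_sorted n u a 1 le_rfl hn hchain (fun y _ => by omega),
        SortedPRAC.Fsum n ((a:ℕ)+1) (by have := a.isLt; omega)]
      have : ((((a:ℕ)+1 : ℕ)):ℝ) ≠ 0 := by positivity
      field_simp
      simp
  · -- unsorted words are rejected with probability at least 1/M
    intro w hw
    simp only [Set.mem_setOf_eq] at hw
    have hnc : ¬ List.IsChain (· ≤ ·) w := fun h => hw (List.isChain_iff_pairwise.mp h)
    obtain ⟨u, a, b, v, rfl, hua, hba⟩ := SortedPRAC.exists_descent w hnc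
    rw [SortedPRAC.accProb_eq]
    have ha : (a:ℕ) < n := a.isLt
    have hbn : (b:ℕ) < n := b.isLt
    have hbA : (b:ℕ) < (a:ℕ) := hba
    have hsplit : u ++ a :: b :: v = (u ++ [a]) ++ (b :: v) := by simp
    rw [hsplit, List.foldl_append,
      SortedPRAC.fold_sorted n u a 1 le_rfl hn hua (fun y _ => by omega),
      List.foldl_cons,
      SortedPRAC.stepB n b ((a:ℕ)+1) (by omega) (by omega)]
    -- name the two values after the descent step
    set c₁ : ℝ := ((((a:ℕ)+1 : ℕ)):ℝ)⁻¹ with hc₁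
    set c₂ : ℝ := (((((a:ℕ)+1-((b:ℕ)+1) : ℕ)):ℝ) * c₁ + (((n+1-((a:ℕ)+1) : ℕ)):ℝ) * 0) / ((n:ℝ)-(b:ℕ)) with hc₂
    have hA1 : ((((a:ℕ)+1 : ℕ)):ℝ) = (a:ℝ)+1 := by push_cast; ring
    have hApos : (0:ℝ) < (a:ℝ)+1 := by positivity
    have hnb : (0:ℝ) < (n:ℝ) - (b:ℕ) := by
      have : ((b:ℕ):ℝ) < (n:ℝ) := by exact_mod_cast hbn
      linarith
    have hc₂' : c₂ = (((a - b : ℕ)):ℝ) / (((a:ℝ)+1) * ((n:ℝ)-(b:ℕ))) := by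
      rw [hc₂, hc₁, hA1]
      have e : ((a:ℕ)+1-((b:ℕ)+1) : ℕ) = a - b := by omega
      rw [e]
      field_simp
      try ring
    have hab : (0:ℝ) < (((a - b : ℕ)):ℝ) := by
      have h : 0 < (a:ℕ) - (b:ℕ) := by omega
      exact_mod_cast h
    have hc₁0 : 0 ≤ c₁ := by rw [hc₁, hA1]; positivity
    have hc₂0 : 0 ≤ c₂ := by
      rw [hc₂']
      positivity
    have hmin : ((M:ℝ))⁻¹ ≤ min c₁ c₂ := by
      refine le_min ?_ ?_
      · rw [hc₁]
        apply inv_anti₀ (by positivity)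
        have : (a:ℕ)+1 ≤ M := by omega
        exact_mod_cast this
      · rw [hc₂', inv_eq_one_div, div_le_div_iff₀ hMpos (by positivity)]
        have hkey := SortedPRAC.key_nat n (a:ℕ) (b:ℕ) hbA ha
        have hcast : ((a:ℝ)+1) * ((n:ℝ)-(b:ℕ)) = (((a+1)*(n-b) : ℕ):ℝ) := by
          push_cast [Nat.cast_sub hbn.le]
          ring
        have hcast2 : (((a - b : ℕ)):ℝ) * (M:ℝ) = (((a-b)*M : ℕ):ℝ) := by
          push_cast
          ring
        rw [one_mul, hcast, hcast2]
        exact_mod_cast hkey.trans_eq (Nat.mul_comm _ _)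
    have hmass : (((b:ℕ)+1 : ℕ):ℝ) * c₁ + ((n+1-((b:ℕ)+1) : ℕ):ℝ) * c₂ = 1 := by
      rw [hc₂', hc₁, hA1]
      have e1 : ((n+1-((b:ℕ)+1) : ℕ):ℝ) = (n:ℝ) - (b:ℕ) := by
        have e : (n+1-((b:ℕ)+1) : ℕ) = n - b := by omega
        rw [e, Nat.cast_sub hbn.le]
      have e2 : (((b:ℕ)+1 : ℕ):ℝ) = (b:ℝ)+1 := by push_cast; ring
      have e3 : (((a - b : ℕ)):ℝ) = (a:ℝ) - (b:ℝ) := by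
        rw [Nat.cast_sub hbA.le]
      rw [e1, e2, e3]
      field_simp
      ring
    obtain ⟨t', c₁', c₂', g1, g2, g3, g4, g5, g6, g7⟩ :=
      SortedPRAC.fold_min n v ((b:ℕ)+1) c₁ c₂ (by omega) (by omega) hc₁0 hc₂0 hmass
    rw [g7, SortedPRAC.Fsum n t' g2]
    have hc₂'big : ((M:ℝ))⁻¹ ≤ c₂' := le_trans hmin (le_trans g6 (min_le_right c₁' c₂'))
    have hsub : ((n+1-t' : ℕ):ℝ) = ((n-t' : ℕ):ℝ) + 1 := by
      have e : (n+1-t' : ℕ) = (n-t') + 1 := by omega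
      rw [e]
      push_cast
      ring
    rw [hsub] at g5
    have : (t':ℝ) * c₁' + ((n - t' : ℕ):ℝ) * c₂' = 1 - c₂' := by linarith
    rw [this, one_div]
    linarith
end

section
/- Let D be a DFA with finite state set Q over alphabet Σ, and write q·w for evalFrom(q,w). Then the following are equivalent: (i) [type (*)] there exist states q, q₁, q₂ with q₁ ≠ q₂ and words x, y such that q·x = q₁, q·y = q₂, q₁·x = q₁, q₂·y = q₂, for every word t that is a concatenation of copies of x and y there exists such a word t₁ with q₁·t·t₁ = q₁, and for every such word t there exists such a word t₂ with q₂·t·t₂ = q₂; (ii) either [type (*′)] there exist states q, q₁, q₂ with q₁ ≠ q₂ and words x, y such that q·x = q₁, q·y = q₂, q₁·x = q₁, q₁·y = q₁, q₂·x = q₂, q₂·y = q₂, or [type (*″)] there exist states q₁ ≠ q₂ and words x, y such that q₁·x = q₂, q₂·x = q₂, and q₂·y = q₁; moreover in the implication from (i) to (ii) the witnessing states q₁ (and q, q₂ in the type-(*′) case) can be taken among the states of the type-(*) configuration and the witnessing words can be taken to be concatenations of copies of x and y. -/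
/-- `t` is a concatenation of copies of the words `x` and `y` (possibly empty). -/
def InStarXY {α : Type} (x y t : List α) : Prop :=
  ∃ l : List Bool, t = (l.map (fun b => if b then x else y)).flatten

/-- A DFA configuration of type `(*)`. -/
def TypeStar {α σ : Type} (D : DFA α σ) : Prop :=
  ∃ (q q1 q2 : σ) (x y : List α), q1 ≠ q2 ∧
    D.evalFrom q x = q1 ∧ D.evalFrom q y = q2 ∧
    D.evalFrom q1 x = q1 ∧ D.evalFrom q2 y = q2 ∧
    (∀ t, InStarXY x y t → ∃ t1, InStarXY x y t1 ∧ D.evalFrom q1 (t ++ t1) = q1) ∧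
    (∀ t, InStarXY x y t → ∃ t2, InStarXY x y t2 ∧ D.evalFrom q2 (t ++ t2) = q2)

/-- A DFA configuration of type `(*')`. -/
def TypeStar' {α σ : Type} (D : DFA α σ) : Prop :=
  ∃ (q q1 q2 : σ) (x y : List α), q1 ≠ q2 ∧
    D.evalFrom q x = q1 ∧ D.evalFrom q y = q2 ∧
    D.evalFrom q1 x = q1 ∧ D.evalFrom q1 y = q1 ∧
    D.evalFrom q2 x = q2 ∧ D.evalFrom q2 y = q2

/-- A DFA configuration of type `(*'')`. -/
def TypeStar'' {α σ : Type} (D : DFA α σ) : Prop :=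
  ∃ (q1 q2 : σ) (x y : List α), q1 ≠ q2 ∧
    D.evalFrom q1 x = q2 ∧ D.evalFrom q2 x = q2 ∧ D.evalFrom q2 y = q1

/-- In a finite type, every self-map has an idempotent iterate. -/
lemma exists_iterate_idem {σ : Type} [Finite σ] (f : σ → σ) :
    ∃ n, 0 < n ∧ ∀ s, f^[n] (f^[n] s) = f^[n] s := by
  obtain ⟨i, j, hne, hij⟩ := Finite.exists_ne_map_eq_of_infinite (fun n : ℕ => f^[n])
  wlog hlt : i < j generalizing i j
  · exact this j i hne.symm hij.symm (by omega)
  set d := j - i with hd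
  have hdpos : 0 < d := by omega
  have key : ∀ m, f^[i + m + d] = f^[i + m] := by
    intro m
    have h0 : f^[i + d] = f^[i] := by rw [show i + d = j by omega, hij]
    calc f^[i + m + d] = f^[m] ∘ f^[i + d] := by
          rw [show i + m + d = m + (i + d) by omega, Function.iterate_add]
      _ = f^[m] ∘ f^[i] := by rw [h0]
      _ = f^[i + m] := by rw [show i + m = m + i by omega, Function.iterate_add]
  have key2 : ∀ k m, f^[i + m + k * d] = f^[i + m] := by
    intro k
    induction k with
    | zero => simp
    | succ k ih =>
      intro m
      rw [show i + m + (k + 1) * d = i + (m + k * d) + d by ring, key,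
        show i + (m + k * d) = i + m + k * d by ring, ih]
  have hni : i + 1 ≤ (i + 1) * d := Nat.le_mul_of_pos_right _ hdpos
  refine ⟨(i + 1) * d, by positivity, fun s => ?_⟩
  have : f^[(i + 1) * d] (f^[(i + 1) * d] s) = f^[(i + 1) * d + (i + 1) * d] s := by
    rw [Function.iterate_add_apply]
  rw [this, show (i + 1) * d + (i + 1) * d = i + ((i + 1) * d - i) + (i + 1) * d by omega,
    key2, show i + ((i + 1) * d - i) = (i + 1) * d by omega]

lemma evalFrom_flatten_replicate {α σ : Type} (D : DFA α σ) (x : List α) :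
    ∀ (n : ℕ) (s : σ),
      D.evalFrom s (List.replicate n x).flatten = (fun s => D.evalFrom s x)^[n] s := by
  intro n
  induction n with
  | zero => intro s; simp [DFA.evalFrom]
  | succ n ih =>
    intro s
    rw [List.replicate_succ, List.flatten_cons, DFA.evalFrom_of_append, ih,
      Function.iterate_succ_apply]

lemma inStarXY_replicate_x {α : Type} (x y : List α) (n : ℕ) :
    InStarXY x y (List.replicate n x).flatten :=
  ⟨List.replicate n true, by simp⟩

lemma inStarXY_replicate_y {α : Type} (x y : List α) (n : ℕ) :
    InStarXY x y (List.replicate n y).flatten :=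
  ⟨List.replicate n false, by simp⟩

lemma fixed_of_inStarXY {α σ : Type} (D : DFA α σ) {x y : List α} {p : σ}
    (hx : D.evalFrom p x = p) (hy : D.evalFrom p y = p) :
    ∀ t, InStarXY x y t → D.evalFrom p t = p := by
  rintro t ⟨l, rfl⟩
  induction l with
  | nil => simp [DFA.evalFrom]
  | cons b l ih =>
    have step : D.evalFrom p (if b = true then x else y) = p := by
      cases b <;> simp [hx, hy]
    simp only [List.map_cons, List.flatten_cons, DFA.evalFrom_of_append, step]
    exact ih

/-- The main forward argument: the "moreover" part of the theorem. -/
lemma main_forward {α σ : Type} [Fintype σ] (D : DFA α σ)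
    (q q1 q2 : σ) (x y : List α) (hne : q1 ≠ q2)
    (hqx : D.evalFrom q x = q1) (hqy : D.evalFrom q y = q2)
    (h1x : D.evalFrom q1 x = q1) (h2y : D.evalFrom q2 y = q2)
    (h1 : ∀ t, InStarXY x y t → ∃ t1, InStarXY x y t1 ∧ D.evalFrom q1 (t ++ t1) = q1)
    (h2 : ∀ t, InStarXY x y t → ∃ t2, InStarXY x y t2 ∧ D.evalFrom q2 (t ++ t2) = q2) :
    ((∃ x' y' : List α, InStarXY x y x' ∧ InStarXY x y y' ∧
        D.evalFrom q x' = q1 ∧ D.evalFrom q y' = q2 ∧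
        D.evalFrom q1 x' = q1 ∧ D.evalFrom q1 y' = q1 ∧
        D.evalFrom q2 x' = q2 ∧ D.evalFrom q2 y' = q2) ∨
      (∃ p1 : σ, (p1 = q ∨ p1 = q1 ∨ p1 = q2) ∧ ∃ (p2 : σ) (x' y' : List α),
        InStarXY x y x' ∧ InStarXY x y y' ∧ p1 ≠ p2 ∧
        D.evalFrom p1 x' = p2 ∧ D.evalFrom p2 x' = p2 ∧ D.evalFrom p2 y' = p1)) := by
  set fx : σ → σ := fun s => D.evalFrom s x with hfx
  set fy : σ → σ := fun s => D.evalFrom s y with hfy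
  obtain ⟨n, hn, hnidem⟩ := exists_iterate_idem fx
  obtain ⟨m, hm, hmidem⟩ := exists_iterate_idem fy
  have hfix1 : ∀ k, fx^[k] q1 = q1 := fun k => by
    induction k with
    | zero => rfl
    | succ k ih => rw [Function.iterate_succ_apply, show fx q1 = q1 from h1x, ih]
  have hfix2 : ∀ k, fy^[k] q2 = q2 := fun k => by
    induction k with
    | zero => rfl
    | succ k ih => rw [Function.iterate_succ_apply, show fy q2 = q2 from h2y, ih]
  have hqxn : fx^[n] q = q1 := by
    obtain ⟨n', rfl⟩ : ∃ n', n = n' + 1 := ⟨n - 1, by omega⟩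
    rw [Function.iterate_succ_apply, show fx q = q1 from hqx, hfix1]
  have hqym : fy^[m] q = q2 := by
    obtain ⟨m', rfl⟩ : ∃ m', m = m' + 1 := ⟨m - 1, by omega⟩
    rw [Function.iterate_succ_apply, show fy q = q2 from hqy, hfix2]
  have hx' : ∀ s, D.evalFrom s (List.replicate n x).flatten = fx^[n] s :=
    fun s => evalFrom_flatten_replicate D x n s
  have hy' : ∀ s, D.evalFrom s (List.replicate m y).flatten = fy^[m] s :=
    fun s => evalFrom_flatten_replicate D y m s
  by_cases hr1 : fy^[m] q1 = q1
  · by_cases hr2 : fx^[n] q2 = q2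
    · -- type (*') configuration
      exact Or.inl ⟨(List.replicate n x).flatten, (List.replicate m y).flatten,
        inStarXY_replicate_x x y n, inStarXY_replicate_y x y m,
        by rw [hx', hqxn], by rw [hy', hqym], by rw [hx', hfix1],
        by rw [hy', hr1], by rw [hx', hr2], by rw [hy', hfix2]⟩
    · -- type (*'') with p1 = q2
      obtain ⟨t2, ht2star, ht2⟩ := h2 ((List.replicate n x).flatten) (inStarXY_replicate_x x y n)
      rw [DFA.evalFrom_of_append, hx'] at ht2
      refine Or.inr ⟨q2, Or.inr (Or.inr rfl), fx^[n] q2, (List.replicate n x).flatten, t2,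
        inStarXY_replicate_x x y n, ht2star, fun h => hr2 h.symm, by rw [hx'],
        by rw [hx']; exact hnidem q2, ht2⟩
  · -- type (*'') with p1 = q1
    obtain ⟨t1, ht1star, ht1⟩ := h1 ((List.replicate m y).flatten) (inStarXY_replicate_y x y m)
    rw [DFA.evalFrom_of_append, hy'] at ht1
    refine Or.inr ⟨q1, Or.inr (Or.inl rfl), fy^[m] q1, (List.replicate m y).flatten, t1,
      inStarXY_replicate_y x y m, ht1star, fun h => hr1 h.symm, by rw [hy'],
      by rw [hy']; exact hmidem q1, ht1⟩

/-- A regular language is of type `(*)` iff it is of type `(*')` or of type `(*'')`;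
moreover in the forward direction the witnessing states may be taken among the states of
the type-`(*)` configuration and the witnessing words may be taken to be concatenations of
copies of `x` and `y`. -/
theorem typeStar_iff_typeStar'_or_typeStar'' {α σ : Type} [Fintype σ] (D : DFA α σ) :
    (TypeStar D ↔ TypeStar' D ∨ TypeStar'' D) ∧
    (∀ (q q1 q2 : σ) (x y : List α), q1 ≠ q2 →
      D.evalFrom q x = q1 → D.evalFrom q y = q2 →
      D.evalFrom q1 x = q1 → D.evalFrom q2 y = q2 →
      (∀ t, InStarXY x y t → ∃ t1, InStarXY x y t1 ∧ D.evalFrom q1 (t ++ t1) = q1) →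
      (∀ t, InStarXY x y t → ∃ t2, InStarXY x y t2 ∧ D.evalFrom q2 (t ++ t2) = q2) →
      ((∃ x' y' : List α, InStarXY x y x' ∧ InStarXY x y y' ∧
          D.evalFrom q x' = q1 ∧ D.evalFrom q y' = q2 ∧
          D.evalFrom q1 x' = q1 ∧ D.evalFrom q1 y' = q1 ∧
          D.evalFrom q2 x' = q2 ∧ D.evalFrom q2 y' = q2) ∨
        (∃ p1 : σ, (p1 = q ∨ p1 = q1 ∨ p1 = q2) ∧ ∃ (p2 : σ) (x' y' : List α),
          InStarXY x y x' ∧ InStarXY x y y' ∧ p1 ≠ p2 ∧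
          D.evalFrom p1 x' = p2 ∧ D.evalFrom p2 x' = p2 ∧ D.evalFrom p2 y' = p1))) := by
  constructor
  · constructor
    · rintro ⟨q, q1, q2, x, y, hne, hqx, hqy, h1x, h2y, h1, h2⟩
      rcases main_forward D q q1 q2 x y hne hqx hqy h1x h2y h1 h2 with
        ⟨x', y', _, _, e1, e2, e3, e4, e5, e6⟩ | ⟨p1, _, p2, x', y', _, _, hpne, e1, e2, e3⟩
      · exact Or.inl ⟨q, q1, q2, x', y', hne, e1, e2, e3, e4, e5, e6⟩
      · exact Or.inr ⟨p1, p2, x', y', hpne, e1, e2, e3⟩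
    · rintro (⟨q, q1, q2, x, y, hne, hqx, hqy, h1x, h1y, h2x, h2y⟩ |
        ⟨q1, q2, x, y, hne, h1x, h2x, h2y⟩)
      · -- (*') implies (*)
        refine ⟨q, q1, q2, x, y, hne, hqx, hqy, h1x, h2y, ?_, ?_⟩
        · intro t ht
          exact ⟨[], ⟨[], rfl⟩, by
            rw [List.append_nil, fixed_of_inStarXY D h1x h1y t ht]⟩
        · intro t ht
          exact ⟨[], ⟨[], rfl⟩, by
            rw [List.append_nil, fixed_of_inStarXY D h2x h2y t ht]⟩
      · -- (*'') implies (*), with words x and x ++ y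
        have hXq1 : D.evalFrom q1 x = q2 := h1x
        have hXq2 : D.evalFrom q2 x = q2 := h2x
        have hYq1 : D.evalFrom q1 (x ++ y) = q1 := by
          rw [DFA.evalFrom_of_append, h1x, h2y]
        have hYq2 : D.evalFrom q2 (x ++ y) = q1 := by
          rw [DFA.evalFrom_of_append, h2x, h2y]
        have inv : ∀ l : List Bool, ∀ p : σ, (p = q1 ∨ p = q2) →
            D.evalFrom p ((l.map (fun b => if b then x else x ++ y)).flatten) = q1 ∨
            D.evalFrom p ((l.map (fun b => if b then x else x ++ y)).flatten) = q2 := by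
          intro l
          induction l with
          | nil => rintro p (rfl | rfl) <;> simp [DFA.evalFrom]
          | cons b l ih =>
            rintro p hp
            have step : D.evalFrom p (if b = true then x else x ++ y) = q1 ∨
                D.evalFrom p (if b = true then x else x ++ y) = q2 := by
              cases b <;> rcases hp with rfl | rfl <;> simp [hXq1, hXq2, hYq1, hYq2]
            simp only [List.map_cons, List.flatten_cons, DFA.evalFrom_of_append]
            exact ih _ step
        have hxStar : InStarXY x (x ++ y) x := ⟨[true], by simp⟩
        have hyStar : InStarXY x (x ++ y) (x ++ y) := ⟨[false], by simp⟩
        refine ⟨q2, q2, q1, x, x ++ y, hne.symm, hXq2, hYq2, hXq2, hYq1, ?_, ?_⟩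
        · rintro t ⟨l, rfl⟩
          rcases inv l q2 (Or.inr rfl) with h | h
          · exact ⟨x, hxStar, by rw [DFA.evalFrom_of_append, h, hXq1]⟩
          · exact ⟨[], ⟨[], rfl⟩, by rw [List.append_nil, h]⟩
        · rintro t ⟨l, rfl⟩
          rcases inv l q1 (Or.inl rfl) with h | h
          · exact ⟨[], ⟨[], rfl⟩, by rw [List.append_nil, h]⟩
          · exact ⟨x ++ y, hyStar, by rw [DFA.evalFrom_of_append, h, hYq2]⟩
  · intro q q1 q2 x y hne hqx hqy h1x h2y h1 h2
    exact main_forward D q q1 q2 x y hne hqx hqy h1x h2y h1 h2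
end

section
/- Let A be an n×n doubly stochastic real matrix. Then for every index i there exists an integer k ≥ 1 such that (A^k)_{i,i} > 0. -/
/-- In a doubly stochastic Markov chain every state is accessible from itself: for every
index `i` there is `k ≥ 1` with `(Aᵏ)ᵢᵢ > 0`. -/
theorem doublyStochastic_exists_pow_diag_pos (n : ℕ) (A : Matrix (Fin n) (Fin n) ℝ)
    (hA : DoublyStochastic A) (i : Fin n) :
    ∃ k : ℕ, 1 ≤ k ∧ 0 < (A ^ k) i i := by
  classical
  obtain ⟨hpos, hrow, hcol⟩ := hA
  -- powers have nonnegative entries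
  have hpownn : ∀ k (a b : Fin n), 0 ≤ (A ^ k) a b := by
    intro k
    induction k with
    | zero =>
      intro a b
      rw [pow_zero]
      by_cases h : a = b <;> simp [Matrix.one_apply, h]
    | succ k ih =>
      intro a b
      rw [pow_succ, Matrix.mul_apply]
      exact Finset.sum_nonneg fun m _ => mul_nonneg (ih a m) (hpos m b)
  -- the set of states reachable from i
  set R : Finset (Fin n) :=
    Finset.univ.filter (fun j => ∃ k, 1 ≤ k ∧ 0 < (A ^ k) i j) with hRdef
  have hmemR : ∀ j, j ∈ R ↔ ∃ k, 1 ≤ k ∧ 0 < (A ^ k) i j := by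
    intro j; simp [hRdef]
  -- R is closed under transitions
  have hclosed : ∀ j ∈ R, ∀ l, 0 < A j l → l ∈ R := by
    intro j hj l hAl
    obtain ⟨k, hk1, hkpos⟩ := (hmemR j).1 hj
    refine (hmemR l).2 ⟨k + 1, le_add_self.trans (le_refl _) |>.trans (Nat.le_add_left 1 k), ?_⟩
    rw [pow_succ, Matrix.mul_apply]
    have hterm : 0 < (A ^ k) i j * A j l := mul_pos hkpos hAl
    have hle : (A ^ k) i j * A j l ≤ ∑ m, (A ^ k) i m * A m l :=
      Finset.single_le_sum (fun m _ => mul_nonneg (hpownn k i m) (hpos m l))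
        (Finset.mem_univ j)
    exact lt_of_lt_of_le hterm hle
  -- no transitions out of R
  have hout : ∀ j ∈ R, ∀ l, l ∉ R → A j l = 0 := by
    intro j hj l hl
    by_contra h
    exact hl (hclosed j hj l (lt_of_le_of_ne (hpos j l) (Ne.symm h)))
  -- row sums over R
  have hsum1 : ∑ j ∈ R, ∑ l ∈ R, A j l = (R.card : ℝ) := by
    have : ∀ j ∈ R, ∑ l ∈ R, A j l = 1 := by
      intro j hj
      rw [← hrow j]
      exact Finset.sum_subset (Finset.subset_univ R) (fun l _ hl => hout j hj l hl)
    rw [Finset.sum_congr rfl this, Finset.sum_const, nsmul_eq_mul, mul_one]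
  -- column sums over R
  have hsum2 : ∑ l ∈ R, ∑ j ∈ R, A j l = (R.card : ℝ) := by
    rw [Finset.sum_comm (f := fun j l => A j l)] at hsum1
    exact hsum1
  have hsum3 : ∑ l ∈ R, ∑ j, A j l = (R.card : ℝ) := by
    have : ∀ l ∈ R, ∑ j, A j l = 1 := fun l _ => hcol l
    rw [Finset.sum_congr rfl this, Finset.sum_const, nsmul_eq_mul, mul_one]
  -- hence no transitions into R from outside
  have hzero : ∀ l ∈ R, ∀ j, j ∉ R → A j l = 0 := by
    have hsplit : ∑ l ∈ R, ∑ j ∈ Rᶜ, A j l = 0 := by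
      have : ∀ l ∈ R, ∑ j, A j l = ∑ j ∈ R, A j l + ∑ j ∈ Rᶜ, A j l := by
        intro l _
        rw [Finset.sum_add_sum_compl]
      rw [Finset.sum_congr rfl this, Finset.sum_add_distrib, hsum2] at hsum3
      linarith
    intro l hl j hj
    have h1 : ∑ j ∈ Rᶜ, A j l = 0 := by
      have := (Finset.sum_eq_zero_iff_of_nonneg
        (fun l hl => Finset.sum_nonneg fun j _ => hpos j l)).1 hsplit
      exact this l hl
    have := (Finset.sum_eq_zero_iff_of_nonneg (fun j _ => hpos j l)).1 h1
    exact this j (Finset.mem_compl.2 hj)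
  -- some first step has positive probability
  have hexj : ∃ j, 0 < A i j := by
    by_contra h
    push_neg at h
    have : ∑ j, A i j ≤ 0 :=
      Finset.sum_nonpos fun j _ => h j
    rw [hrow i] at this
    linarith
  obtain ⟨j, hj⟩ := hexj
  have hjR : j ∈ R := (hmemR j).2 ⟨1, le_refl 1, by rwa [pow_one]⟩
  have hiR : i ∈ R := by
    by_contra h
    have := hzero j hjR i h
    linarith
  exact (hmemR i).1 hiR
end

section
/- Let A be an n×n doubly stochastic real matrix. Then there exists an integer k ≥ 1 such that for every index i, (A^k)_{i,i} > 0. -/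
open Finset Matrix in
private lemma ds_pow_nonneg {n : ℕ} {A : Matrix (Fin n) (Fin n) ℝ}
    (h : ∀ i j, 0 ≤ A i j) : ∀ m (i j : Fin n), 0 ≤ (A ^ m) i j := by
  intro m
  induction m with
  | zero =>
    intro i j
    rw [pow_zero]
    by_cases hij : i = j <;> simp [Matrix.one_apply, hij]
  | succ m ih =>
    intro i j
    rw [pow_succ, Matrix.mul_apply]
    exact Finset.sum_nonneg fun t _ => mul_nonneg (ih i t) (h t j)

open Finset Matrix in
private lemma ds_diag_mul_le {n : ℕ} {A : Matrix (Fin n) (Fin n) ℝ}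
    (h : ∀ i j, 0 ≤ A i j) (a b : ℕ) (i : Fin n) :
    (A ^ a) i i * (A ^ b) i i ≤ (A ^ (a + b)) i i := by
  rw [pow_add, Matrix.mul_apply]
  exact Finset.single_le_sum
    (fun t _ => mul_nonneg (ds_pow_nonneg h a i t) (ds_pow_nonneg h b t i))
    (Finset.mem_univ i)

open Finset Matrix in
private lemma ds_diag_pow_pos {n : ℕ} {A : Matrix (Fin n) (Fin n) ℝ}
    (h : ∀ i j, 0 ≤ A i j) {ℓ : ℕ} {i : Fin n} (hp : 0 < (A ^ ℓ) i i) :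
    ∀ m : ℕ, 0 < (A ^ (ℓ * m)) i i := by
  intro m
  induction m with
  | zero => simp [Matrix.one_apply]
  | succ m ih =>
    have : ℓ * (m + 1) = ℓ * m + ℓ := by ring
    rw [this]
    calc (0 : ℝ) < (A ^ (ℓ * m)) i i * (A ^ ℓ) i i := mul_pos ih hp
      _ ≤ (A ^ (ℓ * m + ℓ)) i i := ds_diag_mul_le h _ _ i

open Finset Matrix in
/-- Every index lies on a cycle: some power has positive diagonal entry at `i`. -/
private lemma ds_exists_cycle {n : ℕ} {A : Matrix (Fin n) (Fin n) ℝ}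
    (hA : DoublyStochastic A) (i : Fin n) :
    ∃ ℓ : ℕ, 1 ≤ ℓ ∧ 0 < (A ^ ℓ) i i := by
  classical
  obtain ⟨hnn, hrow, hcol⟩ := hA
  set S : Finset (Fin n) := Finset.univ.filter (fun j => ∃ m, 0 < (A ^ m) i j) with hS
  have hiS : i ∈ S := by
    refine Finset.mem_filter.2 ⟨Finset.mem_univ _, ⟨0, ?_⟩⟩
    simp [Matrix.one_apply]
  have hclosed : ∀ j ∈ S, ∀ l, 0 < A j l → l ∈ S := by
    intro j hj l hjl
    obtain ⟨m, hm⟩ := (Finset.mem_filter.1 hj).2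
    refine Finset.mem_filter.2 ⟨Finset.mem_univ _, ⟨m + 1, ?_⟩⟩
    rw [pow_succ, Matrix.mul_apply]
    calc (0 : ℝ) < (A ^ m) i j * A j l := mul_pos hm hjl
      _ ≤ ∑ t, (A ^ m) i t * A t l :=
        Finset.single_le_sum
          (fun t _ => mul_nonneg (ds_pow_nonneg hnn m i t) (hnn t l))
          (Finset.mem_univ j)
  -- rows of members of S sum to 1 within S
  have hrowS : ∀ j ∈ S, ∑ l ∈ S, A j l = 1 := by
    intro j hj
    have : ∑ l ∈ S, A j l = ∑ l, A j l := by
      refine Finset.sum_subset (Finset.subset_univ S) ?_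
      intro l _ hl
      by_contra hne
      exact hl (hclosed j hj l (lt_of_le_of_ne (hnn j l) (Ne.symm hne)))
    rw [this, hrow]
  -- key: entries from outside S into S are zero
  have hkey : ∀ j, j ∉ S → ∀ l ∈ S, A j l = 0 := by
    intro j hj l hl
    have h1 : ∑ l ∈ S, ∑ t, A t l = (S.card : ℝ) := by
      rw [Finset.sum_congr rfl fun l _ => hcol l]; simp
    have h2 : ∑ l ∈ S, ∑ t ∈ S, A t l = (S.card : ℝ) := by
      rw [Finset.sum_comm, Finset.sum_congr rfl hrowS]; simp
    have hsplit : ∀ l' ∈ S, ∑ t, A t l' = ∑ t ∈ S, A t l' + ∑ t ∈ Sᶜ, A t l' := by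
      intro l' _
      rw [← Finset.sum_add_sum_compl S (fun t => A t l')]
    have h3 : ∑ l ∈ S, ∑ t ∈ Sᶜ, A t l = 0 := by
      have := Finset.sum_congr rfl hsplit
      rw [h1, Finset.sum_add_distrib, h2] at this
      linarith
    have hterm : ∑ t ∈ Sᶜ, A t l = 0 :=
      (Finset.sum_eq_zero_iff_of_nonneg
        (fun l' _ => Finset.sum_nonneg fun t _ => hnn t l')).1 h3 l hl
    exact (Finset.sum_eq_zero_iff_of_nonneg (fun t _ => hnn t l)).1 hterm j
      (Finset.mem_compl.2 hj)
  -- there is j with A j i > 0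
  have hex : ∃ j, 0 < A j i := by
    by_contra hcon
    push_neg at hcon
    have : ∑ t, A t i = 0 :=
      le_antisymm (Finset.sum_nonpos fun t _ => hcon t)
        (Finset.sum_nonneg fun t _ => hnn t i)
    rw [hcol i] at this
    norm_num at this
  obtain ⟨j, hj⟩ := hex
  have hjS : j ∈ S := by
    by_contra hjn
    have := hkey j hjn i hiS
    linarith
  obtain ⟨m, hm⟩ := (Finset.mem_filter.1 hjS).2
  refine ⟨m + 1, Nat.le_add_left 1 m, ?_⟩
  rw [pow_succ, Matrix.mul_apply]
  calc (0 : ℝ) < (A ^ m) i j * A j i := mul_pos hm hj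
    _ ≤ ∑ t, (A ^ m) i t * A t i :=
      Finset.single_le_sum
        (fun t _ => mul_nonneg (ds_pow_nonneg hnn m i t) (hnn t i))
        (Finset.mem_univ j)

/-- For a doubly stochastic matrix `A` there exists `k ≥ 1` such that all diagonal entries
of `Aᵏ` are positive. -/
theorem doublyStochastic_exists_pow_all_diag_pos (n : ℕ) (A : Matrix (Fin n) (Fin n) ℝ)
    (hA : DoublyStochastic A) :
    ∃ k : ℕ, 1 ≤ k ∧ ∀ i : Fin n, 0 < (A ^ k) i i := by
  classical
  have hnn := hA.1
  choose ℓ hℓ1 hℓpos using ds_exists_cycle hA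
  refine ⟨∏ j, ℓ j, Finset.one_le_prod' fun j _ => hℓ1 j, fun i => ?_⟩
  have : ∏ j, ℓ j = ℓ i * ∏ j ∈ Finset.univ.erase i, ℓ j :=
    (Finset.mul_prod_erase Finset.univ ℓ (Finset.mem_univ i)).symm
  rw [this]
  exact ds_diag_pow_pos hnn (hℓpos i) _
end

section
/- Let A be an n×n doubly stochastic real matrix and let a, b be indices with A_{b,a} > 0. Then there exists an integer m ≥ 1 such that (A^m)_{a,b} > 0. -/
/-- In a doubly stochastic Markov chain, if `q_b` is accessible from `q_a` in one step then
`q_a` is accessible from `q_b`. -/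
theorem doublyStochastic_one_step_back (n : ℕ) (A : Matrix (Fin n) (Fin n) ℝ)
    (hA : DoublyStochastic A) (a b : Fin n) (hab : 0 < A b a) :
    ∃ m : ℕ, 1 ≤ m ∧ 0 < (A ^ m) a b := by
  classical
  obtain ⟨hnn, hrow, hcol⟩ := hA
  -- powers have nonnegative entries
  have hpow : ∀ m (i j : Fin n), 0 ≤ (A ^ m) i j := by
    intro m
    induction m with
    | zero => intro i j; simp [Matrix.one_apply]; positivity
    | succ m ih =>
      intro i j
      rw [pow_succ, Matrix.mul_apply]
      exact Finset.sum_nonneg fun k _ => mul_nonneg (ih i k) (hnn k j)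
  -- the set of states reachable from a
  set S : Finset (Fin n) := Finset.univ.filter (fun j => ∃ m, 0 < (A ^ m) a j) with hS
  have haS : a ∈ S := by
    simp only [hS, Finset.mem_filter, Finset.mem_univ, true_and]
    exact ⟨0, by simp [Matrix.one_apply]⟩
  have hclosed : ∀ i ∈ S, ∀ j, 0 < A i j → j ∈ S := by
    intro i hi j hij
    simp only [hS, Finset.mem_filter, Finset.mem_univ, true_and] at hi ⊢
    obtain ⟨m, hm⟩ := hi
    refine ⟨m + 1, ?_⟩
    rw [pow_succ, Matrix.mul_apply]
    refine Finset.sum_pos' (fun k _ => mul_nonneg (hpow m a k) (hnn k j)) ⟨i, Finset.mem_univ i, ?_⟩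
    exact mul_pos hm hij
  -- rows of elements of S are supported in S
  have hrowS : ∀ i ∈ S, ∑ j ∈ S, A i j = 1 := by
    intro i hi
    have h0 : ∀ j ∈ Finset.univ, j ∉ S → A i j = 0 := fun j _ hjS => by
      by_contra h
      exact hjS (hclosed i hi j (lt_of_le_of_ne (hnn i j) (Ne.symm h)))
    rw [Finset.sum_subset (Finset.subset_univ S) h0, hrow i]
  -- double counting
  have hsum1 : ∑ i ∈ S, ∑ j ∈ S, A i j = (S.card : ℝ) := by
    rw [Finset.sum_congr rfl hrowS]; simp
  have hsum2 : ∑ j ∈ S, ∑ i : Fin n, A i j = (S.card : ℝ) := by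
    rw [Finset.sum_congr rfl (fun j _ => hcol j)]; simp
  have hsplit : ∑ j ∈ S, ∑ i : Fin n, A i j
      = ∑ j ∈ S, ∑ i ∈ S, A i j + ∑ j ∈ S, ∑ i ∈ Sᶜ, A i j := by
    rw [← Finset.sum_add_distrib]
    refine Finset.sum_congr rfl fun j _ => ?_
    rw [← Finset.sum_add_sum_compl S]
  have hzero : ∑ j ∈ S, ∑ i ∈ Sᶜ, A i j = 0 := by
    have : ∑ j ∈ S, ∑ i ∈ S, A i j = ∑ i ∈ S, ∑ j ∈ S, A i j := Finset.sum_comm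
    nlinarith [hsum1, hsum2, hsplit]
  -- hence every entry from outside S into S is zero
  have hbS : b ∈ S := by
    by_contra hb
    have hba : A b a = 0 := by
      have := (Finset.sum_eq_zero_iff_of_nonneg (fun j _ =>
        Finset.sum_nonneg fun i _ => hnn i j)).mp hzero a haS
      have := (Finset.sum_eq_zero_iff_of_nonneg (fun i _ => hnn i a)).mp this b
        (Finset.mem_compl.mpr hb)
      exact this
    exact absurd hba (ne_of_gt hab)
  simp only [hS, Finset.mem_filter, Finset.mem_univ, true_and] at hbS
  obtain ⟨m, hm⟩ := hbS
  rcases Nat.eq_zero_or_pos m with rfl | hm1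
  · have : a = b := by
      by_contra hne
      simp [Matrix.one_apply, hne] at hm
    exact ⟨1, le_refl 1, by simpa [pow_one, ← this] using hab⟩
  · exact ⟨m, hm1, hm⟩
end

section
/- Let A be an n×n doubly stochastic real matrix and let a, b be indices such that (A^k)_{b,a} > 0 for some integer k ≥ 1. Then there exists an integer m ≥ 1 such that (A^m)_{a,b} > 0 (accessibility in the associated doubly stochastic Markov chain is symmetric). -/
open Finset

private lemma pow_entry_nonneg {n : ℕ} {A : Matrix (Fin n) (Fin n) ℝ}
    (h : ∀ i j, 0 ≤ A i j) : ∀ (m : ℕ) (i j : Fin n), 0 ≤ (A ^ m) i j := by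
  intro m
  induction m with
  | zero => intro i j; simp [Matrix.one_apply]; positivity
  | succ m ih =>
    intro i j
    rw [pow_succ, Matrix.mul_apply]
    exact Finset.sum_nonneg fun c _ => mul_nonneg (ih i c) (h c j)

/-- In a doubly stochastic Markov chain accessibility is symmetric: if `q_b` is accessible
from `q_a` then `q_a` is accessible from `q_b`. -/
theorem doublyStochastic_accessible_symm (n : ℕ) (A : Matrix (Fin n) (Fin n) ℝ)
    (hA : DoublyStochastic A) (a b : Fin n) (hab : ∃ k : ℕ, 1 ≤ k ∧ 0 < (A ^ k) b a) :
    ∃ m : ℕ, 1 ≤ m ∧ 0 < (A ^ m) a b := by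
  classical
  obtain ⟨hnn, hrow, hcol⟩ := hA
  obtain ⟨k, hk1, hk⟩ := hab
  have hpow := pow_entry_nonneg hnn
  -- S : states reachable from a in ≥ 0 steps
  set S : Finset (Fin n) := Finset.univ.filter (fun j => ∃ m : ℕ, 0 < (A ^ m) a j) with hS
  have hmemS : ∀ j, j ∈ S ↔ ∃ m : ℕ, 0 < (A ^ m) a j := by
    intro j; simp [hS]
  have haS : a ∈ S := (hmemS a).2 ⟨0, by simp [Matrix.one_apply]⟩
  -- forward closure
  have hfwd : ∀ i ∈ S, ∀ j, 0 < A i j → j ∈ S := by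
    intro i hi j hij
    obtain ⟨m, hm⟩ := (hmemS i).1 hi
    refine (hmemS j).2 ⟨m + 1, ?_⟩
    rw [pow_succ, Matrix.mul_apply]
    have : 0 < (A ^ m) a i * A i j := mul_pos hm hij
    refine lt_of_lt_of_le this ?_
    exact Finset.single_le_sum (f := fun c => (A ^ m) a c * A c j)
      (fun c _ => mul_nonneg (hpow m a c) (hnn c j)) (mem_univ i)
  -- for i ∈ S, outgoing mass to Sᶜ is 0, hence ∑_{i∈S}∑_{j∈S} A i j = card S
  have hout : ∀ i ∈ S, ∀ j ∈ Sᶜ, A i j = 0 := by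
    intro i hi j hj
    by_contra hne
    have hpos : 0 < A i j := lt_of_le_of_ne (hnn i j) (Ne.symm hne)
    exact (Finset.mem_compl.1 hj) (hfwd i hi j hpos)
  have hsq : ∑ i ∈ S, ∑ j ∈ S, A i j = (S.card : ℝ) := by
    have : ∑ i ∈ S, ∑ j, A i j = (S.card : ℝ) := by
      rw [Finset.sum_congr rfl (fun i _ => hrow i)]; simp
    rw [← this]
    refine Finset.sum_congr rfl fun i hi => ?_
    rw [← Finset.sum_add_sum_compl S (fun j => A i j)]
    have : ∑ j ∈ Sᶜ, A i j = 0 := Finset.sum_eq_zero (hout i hi)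
    rw [this, add_zero]
  -- column sums: mass into S from Sᶜ is 0
  have hin : ∀ i ∈ Sᶜ, ∀ j ∈ S, A i j = 0 := by
    have hcolS : ∑ j ∈ S, ∑ i, A i j = (S.card : ℝ) := by
      rw [Finset.sum_congr rfl (fun j _ => hcol j)]; simp
    have hsplit : ∑ j ∈ S, ∑ i, A i j
        = ∑ j ∈ S, ∑ i ∈ S, A i j + ∑ j ∈ S, ∑ i ∈ Sᶜ, A i j := by
      rw [← Finset.sum_add_distrib]
      refine Finset.sum_congr rfl fun j _ => ?_
      rw [← Finset.sum_add_sum_compl S (fun i => A i j)]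
    have hswap : ∑ j ∈ S, ∑ i ∈ S, A i j = (S.card : ℝ) := by
      rw [Finset.sum_comm]; exact hsq
    have hzero : ∑ j ∈ S, ∑ i ∈ Sᶜ, A i j = 0 := by
      have := hsplit
      rw [hcolS, hswap] at this
      linarith
    intro i hi j hj
    have h1 : ∀ j ∈ S, ∑ i ∈ Sᶜ, A i j = 0 := by
      intro j' hj'
      have := (Finset.sum_eq_zero_iff_of_nonneg
        (fun j'' _ => Finset.sum_nonneg fun i' _ => hnn i' j'')).1 hzero
      exact this j' hj'
    have := (Finset.sum_eq_zero_iff_of_nonneg (fun i' _ => hnn i' j)).1 (h1 j hj)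
    exact this i hi
  -- backward closure for one step
  have hbwd1 : ∀ i j, 0 < A i j → j ∈ S → i ∈ S := by
    intro i j hij hj
    by_contra hi
    have : A i j = 0 := hin i (Finset.mem_compl.2 hi) j hj
    rw [this] at hij; exact lt_irrefl 0 hij
  -- backward closure for powers
  have hbwd : ∀ (m : ℕ) (i j : Fin n), 0 < (A ^ m) i j → j ∈ S → i ∈ S := by
    intro m
    induction m with
    | zero =>
      intro i j h hj
      have : i = j := by
        by_contra hne
        simp [Matrix.one_apply, hne] at h
      rwa [this]
    | succ m ih =>
      intro i j h hj
      rw [pow_succ', Matrix.mul_apply] at h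
      have : ∃ c, 0 < A i c * (A ^ m) c j := by
        by_contra hc
        push_neg at hc
        have : ∑ c, A i c * (A ^ m) c j ≤ 0 := Finset.sum_nonpos fun c _ => hc c
        linarith
      obtain ⟨c, hc⟩ := this
      have hAic : 0 < A i c := by
        rcases mul_pos_iff.1 hc with ⟨h1, _⟩ | ⟨h1, h2⟩
        · exact h1
        · exact absurd (hpow m c j) (not_le.2 h2)
      have hAcj : 0 < (A ^ m) c j := by
        rcases mul_pos_iff.1 hc with ⟨_, h2⟩ | ⟨h1, _⟩
        · exact h2
        · exact absurd (hnn i c) (not_le.2 h1)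
      exact hbwd1 i c hAic (ih c j hAcj hj)
  -- b ∈ S
  have hbS : b ∈ S := hbwd k b a hk haS
  obtain ⟨m, hm⟩ := (hmemS b).1 hbS
  rcases Nat.eq_zero_or_pos m with hm0 | hm1
  · subst hm0
    have hba : a = b := by
      by_contra hne
      simp [Matrix.one_apply, hne] at hm
    exact ⟨k, hk1, hba ▸ hk⟩
  · exact ⟨m, hm1, hm⟩
end
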